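/- arXiv:2206.00094 — 2 statements merged into one kernel-verified Lean document; each statement's English description precedes it below -/
import Mathlib

section
/- Let p_n denote the number of tagged partitions of {1,…,n} (with p_0 = 1). Then the exponential generating function of (p_n) satisfies ∑_{n=0}^∞ p_n x^n/n! = exp((exp(2x) − 1 + 2x)/2) as formal power series over ℚ. -/
/-- A tagged partition of `{1,…,n}` (modeled as `Fin n`): a partition into nonempty
classes together with a partial involution on the classes having at most one fixed point.
The partial involution is encoded by `star`, with `star P = none` meaning `*` is
undefined at `P` (in particular `star P = none` for any `P` that is not a class). -/
structure TaggedPartition (n : ℕ) where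
  classes : Set (Set (Fin n))
  classes_nonempty : ∀ P ∈ classes, P.Nonempty
  cover : ∀ i : Fin n, ∃ P ∈ classes, i ∈ P
  eq_of_inter : ∀ P ∈ classes, ∀ Q ∈ classes, (P ∩ Q).Nonempty → P = Q
  star : Set (Fin n) → Option (Set (Fin n))
  star_dom : ∀ P, star P ≠ none → P ∈ classes
  star_ran : ∀ P Q, star P = some Q → Q ∈ classes
  star_invol : ∀ P Q, star P = some Q → star Q = some P
  star_fixed : ∀ P Q, star P = some P → star Q = some Q → P = Q

/-- The polydiagonal subspace `Δ_tp ⊆ ℝⁿ` of a tagged partition: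
`x_i = x_j` whenever `[i] = [j]`, and `x_i = -x_j` whenever `[i]* = [j]`. -/
def TaggedPartition.polydiag {n : ℕ} (tp : TaggedPartition n) : Set (Fin n → ℝ) :=
  {x | (∀ P ∈ tp.classes, ∀ i ∈ P, ∀ j ∈ P, x i = x j) ∧
       (∀ P Q, tp.star P = some Q → ∀ i ∈ P, ∀ j ∈ Q, x i = - x j)}

/-- `Δ_tp` is a synchrony subspace: the partial involution is the empty function. -/
def TaggedPartition.IsSynchrony {n : ℕ} (tp : TaggedPartition n) : Prop :=
  ∀ P, tp.star P = none

/-- Fully tagged: the partial involution is defined on every class. -/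
def TaggedPartition.FullyTagged {n : ℕ} (tp : TaggedPartition n) : Prop :=
  ∀ P ∈ tp.classes, tp.star P ≠ none

/-- Evenly tagged: fully tagged and `#P = #P*` for every class `P`. -/
def TaggedPartition.EvenlyTagged {n : ℕ} (tp : TaggedPartition n) : Prop :=
  tp.FullyTagged ∧ ∀ P Q, tp.star P = some Q → P.ncard = Q.ncard

open PowerSeries in
/-- The exponential `exp(A) = ∑_k A^k / k!` of a formal power series `A` over `ℚ`
with zero constant term (the coefficient formula below is the correct one in that
case, since then `A^k` contributes nothing to the `n`-th coefficient for `k > n`). -/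
noncomputable def pexp (A : PowerSeries ℚ) : PowerSeries ℚ :=
  PowerSeries.mk fun n =>
    ∑ k ∈ Finset.range (n + 1), (PowerSeries.coeff n (A ^ k)) / (Nat.factorial k : ℚ)


open Set

/-- Tagged partition of a subset `S` of `α`. -/
structure TPS (α : Type) (S : Set α) where
  classes : Set (Set α)
  subset_S : ∀ P ∈ classes, P ⊆ S
  nonempty : ∀ P ∈ classes, P.Nonempty
  cover : ∀ i ∈ S, ∃ P ∈ classes, i ∈ P
  eq_of_inter : ∀ P ∈ classes, ∀ Q ∈ classes, (P ∩ Q).Nonempty → P = Q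
  star : Set α → Option (Set α)
  star_dom : ∀ P, star P ≠ none → P ∈ classes
  star_ran : ∀ P Q, star P = some Q → Q ∈ classes
  star_invol : ∀ P Q, star P = some Q → star Q = some P
  star_fixed : ∀ P Q, star P = some P → star Q = some Q → P = Q

namespace TPS

attribute [local instance] Classical.propDecidable

variable {α : Type} {S T : Set α}

theorem ext' {tp tq : TPS α S} (h1 : tp.classes = tq.classes) (h2 : tp.star = tq.star) :
    tp = tq := by
  cases tp; cases tq; simp_all

def NoFixed (tp : TPS α S) : Prop := ∀ P, tp.star P ≠ some P

theorem star_none_of_not_mem (tp : TPS α S) {P} (h : P ∉ tp.classes) : tp.star P = none := by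
  by_contra h'; exact h (tp.star_dom P h')

instance [Finite α] : Finite (TPS α S) := by
  haveI := Fintype.ofFinite (Set α)
  apply Finite.of_injective (fun tp => (tp.classes, tp.star))
  intro tp tq h
  simp only [Prod.mk.injEq] at h
  exact ext' h.1 h.2

/-- the class of `a`. -/
def classOf (tp : TPS α S) (a : α) : Set α := ⋃₀ {P ∈ tp.classes | a ∈ P}

theorem classOf_eq (tp : TPS α S) {a : α} {P} (hP : P ∈ tp.classes) (haP : a ∈ P) :
    tp.classOf a = P := by
  have h : {Q ∈ tp.classes | a ∈ Q} = {P} := by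
    ext Q
    simp only [mem_setOf_eq, mem_singleton_iff]
    constructor
    · rintro ⟨hQ, haQ⟩; exact tp.eq_of_inter Q hQ P hP ⟨a, haQ, haP⟩
    · rintro rfl; exact ⟨hP, haP⟩
  rw [classOf, h, sUnion_singleton]

theorem classOf_spec (tp : TPS α S) {a : α} (ha : a ∈ S) :
    tp.classOf a ∈ tp.classes ∧ a ∈ tp.classOf a := by
  obtain ⟨P, hP, haP⟩ := tp.cover a ha
  rw [tp.classOf_eq hP haP]; exact ⟨hP, haP⟩

/-- classes are disjoint from other classes -/
theorem disj (tp : TPS α S) {P Q} (hP : P ∈ tp.classes) (hQ : Q ∈ tp.classes)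
    (hne : P ≠ Q) : P ∩ Q = ∅ := by
  by_contra h
  exact hne (tp.eq_of_inter P hP Q hQ (nonempty_iff_ne_empty.2 h))

/-- Remove a star-closed set of classes. -/
noncomputable def restrictAway (tp : TPS α S) (D : Set (Set α)) (hD : D ⊆ tp.classes)
    (hcl : ∀ P ∈ D, ∀ Q, tp.star P = some Q → Q ∈ D) : TPS α (S \ ⋃₀ D) where
  classes := tp.classes \ D
  subset_S := by
    rintro P ⟨hP, hPD⟩ x hx
    refine ⟨tp.subset_S P hP hx, ?_⟩
    rintro ⟨Q, hQ, hxQ⟩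
    have : P = Q := tp.eq_of_inter P hP Q (hD hQ) ⟨x, hx, hxQ⟩
    exact hPD (this ▸ hQ)
  nonempty := fun P hP => tp.nonempty P hP.1
  cover := by
    rintro i ⟨hiS, hiD⟩
    obtain ⟨P, hP, hiP⟩ := tp.cover i hiS
    exact ⟨P, ⟨hP, fun hPD => hiD ⟨P, hPD, hiP⟩⟩, hiP⟩
  eq_of_inter := fun P hP Q hQ h => tp.eq_of_inter P hP.1 Q hQ.1 h
  star := fun P => if P ∈ tp.classes \ D then tp.star P else none
  star_dom := by
    intro P h
    by_cases hP : P ∈ tp.classes \ D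
    · exact hP
    · simp [hP] at h
  star_ran := by
    intro P Q h
    by_cases hP : P ∈ tp.classes \ D
    · simp only [if_pos hP] at h
      refine ⟨tp.star_ran P Q h, fun hQD => hP.2 (hcl Q hQD P (tp.star_invol P Q h))⟩
    · simp [hP] at h
  star_invol := by
    intro P Q h
    by_cases hP : P ∈ tp.classes \ D
    · simp only [if_pos hP] at h
      have hQ : Q ∈ tp.classes \ D :=
        ⟨tp.star_ran P Q h, fun hQD => hP.2 (hcl Q hQD P (tp.star_invol P Q h))⟩
      simp only [if_pos hQ]
      exact tp.star_invol P Q h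
    · simp [hP] at h
  star_fixed := by
    intro P Q hP hQ
    by_cases hP' : P ∈ tp.classes \ D
    · by_cases hQ' : Q ∈ tp.classes \ D
      · simp only [if_pos hP'] at hP; simp only [if_pos hQ'] at hQ
        exact tp.star_fixed P Q hP hQ
      · simp [hQ'] at hQ
    · simp [hP'] at hP

/-- Disjoint union of two tagged partitions, the second without fixed point. -/
noncomputable def disjUnion (tp : TPS α S) (tq : TPS α T) (hST : Disjoint S T)
    (hq : tq.NoFixed) : TPS α (S ∪ T) where
  classes := tp.classes ∪ tq.classes
  subset_S := by
    rintro P (hP | hP)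
    · exact (tp.subset_S P hP).trans subset_union_left
    · exact (tq.subset_S P hP).trans subset_union_right
  nonempty := by rintro P (hP | hP); exacts [tp.nonempty P hP, tq.nonempty P hP]
  cover := by
    rintro i (hi | hi)
    · obtain ⟨P, hP, h⟩ := tp.cover i hi; exact ⟨P, Or.inl hP, h⟩
    · obtain ⟨P, hP, h⟩ := tq.cover i hi; exact ⟨P, Or.inr hP, h⟩
  eq_of_inter := by
    rintro P (hP | hP) Q (hQ | hQ) h
    · exact tp.eq_of_inter P hP Q hQ h
    · obtain ⟨x, hx1, hx2⟩ := h
      exact absurd (hST.ne_of_mem (tp.subset_S P hP hx1) (tq.subset_S Q hQ hx2)) (by simp)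
    · obtain ⟨x, hx1, hx2⟩ := h
      exact absurd (hST.ne_of_mem (tp.subset_S Q hQ hx2) (tq.subset_S P hP hx1)) (by simp)
    · exact tq.eq_of_inter P hP Q hQ h
  star := fun P => if P ∈ tp.classes then tp.star P else tq.star P
  star_dom := by
    intro P h
    by_cases hP : P ∈ tp.classes
    · exact Or.inl hP
    · simp only [if_neg hP] at h
      exact Or.inr (tq.star_dom P h)
  star_ran := by
    intro P Q h
    by_cases hP : P ∈ tp.classes
    · simp only [if_pos hP] at h; exact Or.inl (tp.star_ran P Q h)
    · simp only [if_neg hP] at h; exact Or.inr (tq.star_ran P Q h)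
  star_invol := by
    have key : ∀ P, P ∈ tp.classes → P ∉ tq.classes := by
      intro P h1 h2
      obtain ⟨x, hx⟩ := tp.nonempty P h1
      exact hST.ne_of_mem (tp.subset_S P h1 hx) (tq.subset_S P h2 hx) rfl
    intro P Q h
    by_cases hP : P ∈ tp.classes
    · simp only [if_pos hP] at h
      simp only [if_pos (tp.star_ran P Q h)]
      exact tp.star_invol P Q h
    · simp only [if_neg hP] at h
      have hQ : Q ∈ tq.classes := tq.star_ran P Q h
      simp only [if_neg (fun h' => key Q h' hQ)]
      exact tq.star_invol P Q h
  star_fixed := by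
    intro P Q hP hQ
    by_cases hP' : P ∈ tp.classes
    · by_cases hQ' : Q ∈ tp.classes
      · simp only [if_pos hP'] at hP; simp only [if_pos hQ'] at hQ
        exact tp.star_fixed P Q hP hQ
      · simp only [if_neg hQ'] at hQ
        exact absurd hQ (hq Q)
    · simp only [if_neg hP'] at hP
      exact absurd hP (hq P)



theorem restrictAway_classes (tp : TPS α S) (D : Set (Set α)) (hD hcl) :
    (tp.restrictAway D hD hcl).classes = tp.classes \ D := rfl

theorem restrictAway_star (tp : TPS α S) (D : Set (Set α)) (hD hcl) (R : Set α) :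
    (tp.restrictAway D hD hcl).star R =
      if R ∈ tp.classes \ D then tp.star R else none := rfl

theorem disjUnion_classes (tp : TPS α S) (tq : TPS α T) (hST hq) :
    (tp.disjUnion tq hST hq).classes = tp.classes ∪ tq.classes := rfl

theorem disjUnion_star (tp : TPS α S) (tq : TPS α T) (hST hq) (R : Set α) :
    (tp.disjUnion tq hST hq).star R =
      if R ∈ tp.classes then tp.star R else tq.star R := rfl
/-- single untagged class -/
def singleU (s : Set α) (hs : s.Nonempty) : TPS α s where
  classes := {s}
  subset_S := by rintro P rfl; rfl
  nonempty := by rintro P rfl; exact hs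
  cover := fun i hi => ⟨s, rfl, hi⟩
  eq_of_inter := by rintro P rfl Q rfl _; rfl
  star := fun _ => none
  star_dom := by intro P h; simp at h
  star_ran := by intro P Q h; simp at h
  star_invol := by intro P Q h; simp at h
  star_fixed := by intro P Q h; simp at h

theorem singleU_noFixed (s : Set α) (hs : s.Nonempty) : (singleU s hs).NoFixed := by
  intro P; simp [singleU]

theorem pair_ne {P Q : Set α} (hd : Disjoint P Q) (hP : P.Nonempty) : P ≠ Q := by
  rintro rfl
  obtain ⟨x, hx⟩ := hP
  exact hd.ne_of_mem hx hx rfl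

/-- single fixed class -/
noncomputable def singleF (s : Set α) (hs : s.Nonempty) : TPS α s where
  classes := {s}
  subset_S := by rintro P rfl; rfl
  nonempty := by rintro P rfl; exact hs
  cover := fun i hi => ⟨s, rfl, hi⟩
  eq_of_inter := by rintro P rfl Q rfl _; rfl
  star := fun P => if P = s then some s else none
  star_dom := by
    intro P h
    by_cases hP : P = s
    · exact hP
    · simp [hP] at h
  star_ran := by
    intro P Q h
    by_cases hP : P = s
    · simp only [if_pos hP] at h; injection h with h; simp [← h]
    · simp [hP] at h
  star_invol := by
    intro P Q h
    by_cases hP : P = s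
    · simp only [if_pos hP] at h; injection h with h; subst h; subst hP; simp
    · simp [hP] at h
  star_fixed := by
    intro P Q hP hQ
    by_cases hP' : P = s
    · by_cases hQ' : Q = s
      · rw [hP', hQ']
      · simp [hQ'] at hQ
    · simp [hP'] at hP

/-- a matched pair of classes -/
noncomputable def pairT (P Q : Set α) (hP : P.Nonempty) (hQ : Q.Nonempty) (hd : Disjoint P Q) :
    TPS α (P ∪ Q) where
  classes := {P, Q}
  subset_S := by rintro R (rfl | rfl); exacts [subset_union_left, subset_union_right]
  nonempty := by rintro R (rfl | rfl); exacts [hP, hQ]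
  cover := by rintro i (hi | hi)
              · exact ⟨P, Or.inl rfl, hi⟩
              · exact ⟨Q, Or.inr rfl, hi⟩
  eq_of_inter := by
    have h' : ¬ (P ∩ Q).Nonempty := by
      rw [Set.not_nonempty_iff_eq_empty, ← Set.disjoint_iff_inter_eq_empty]; exact hd
    rintro R (rfl | rfl) R' (rfl | rfl) h
    · rfl
    · exact absurd h h'
    · exact absurd h (by rwa [Set.inter_comm] at h')
    · rfl
  star := fun R => if R = P then some Q else if R = Q then some P else none
  star_dom := by
    intro R h
    by_cases h1 : R = P
    · exact Or.inl h1
    · by_cases h2 : R = Q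
      · exact Or.inr h2
      · simp [h1, h2] at h
  star_ran := by
    intro R R' h
    by_cases h1 : R = P
    · simp only [if_pos h1] at h; cases h; exact Or.inr rfl
    · by_cases h2 : R = Q
      · simp only [if_neg h1, if_pos h2] at h; cases h; exact Or.inl rfl
      · simp [h1, h2] at h
  star_invol := by
    have hPQ : P ≠ Q := pair_ne hd hP
    intro R R' h
    by_cases h1 : R = P
    · simp only [if_pos h1] at h; injection h with h; subst h; subst h1
      simp [Ne.symm hPQ]
    · by_cases h2 : R = Q
      · simp only [if_neg h1, if_pos h2] at h; injection h with h; subst h; subst h2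
        simp [hPQ]
      · simp [h1, h2] at h
  star_fixed := by
    have hPQ : P ≠ Q := pair_ne hd hP
    intro R R' h h'
    exfalso
    by_cases h1 : R = P
    · simp only [if_pos h1] at h; injection h with h; exact hPQ (h1 ▸ h).symm
    · by_cases h2 : R = Q
      · simp only [if_neg h1, if_pos h2] at h; injection h with h; exact hPQ (h2 ▸ h)
      · simp [h1, h2] at h

theorem pairT_noFixed (P Q : Set α) (hP hQ hd) : (pairT P Q hP hQ hd).NoFixed := by
  have hPQ : P ≠ Q := pair_ne hd hP
  intro R h
  simp only [pairT] at h
  by_cases h1 : R = P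
  · simp only [if_pos h1] at h; injection h with h; exact hPQ (h1 ▸ h).symm
  · by_cases h2 : R = Q
    · simp only [if_neg h1, if_pos h2] at h; injection h with h; exact hPQ (h2 ▸ h)
    · simp [h1, h2] at h

/-- transfer along an equality of index sets -/
def copy (tp : TPS α S) (h : S = T) : TPS α T := h ▸ tp

@[simp] theorem copy_classes (tp : TPS α S) (h : S = T) : (tp.copy h).classes = tp.classes := by
  subst h; rfl

@[simp] theorem copy_star (tp : TPS α S) (h : S = T) : (tp.copy h).star = tp.star := by
  subst h; rfl

theorem copy_noFixed (tp : TPS α S) (h : S = T) (h' : tp.NoFixed) : (tp.copy h).NoFixed := by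
  subst h; exact h'

@[simp] theorem copy_rfl (tp : TPS α S) (h : S = S) : tp.copy h = tp := rfl

@[simp] theorem singleU_classes (s : Set α) (hs) : (singleU s hs).classes = {s} := rfl
@[simp] theorem singleU_star (s : Set α) (hs) (R : Set α) : (singleU s hs).star R = none := rfl
theorem pairT_classes (P Q : Set α) (hP hQ hd) : (pairT P Q hP hQ hd).classes = {P, Q} := rfl
theorem pairT_star (P Q : Set α) (hP hQ hd) (R : Set α) :
    (pairT P Q hP hQ hd).star R =
      if R = P then some Q else if R = Q then some P else none := rfl
section Transport

variable {γ : Type} {f : γ → α}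

/-- Transport a tagged partition along an injection. -/
noncomputable def transport (f : γ → α) (hf : Function.Injective f) (tp : TPS γ univ) :
    TPS α (Set.range f) where
  classes := (Set.image f) '' tp.classes
  subset_S := by rintro P ⟨R, _, rfl⟩; exact image_subset_range f R
  nonempty := by rintro P ⟨R, hR, rfl⟩; exact (tp.nonempty R hR).image f
  cover := by
    rintro i ⟨x, rfl⟩
    obtain ⟨R, hR, hx⟩ := tp.cover x (mem_univ x)
    exact ⟨f '' R, ⟨R, hR, rfl⟩, ⟨x, hx, rfl⟩⟩
  eq_of_inter := by
    rintro P ⟨R, hR, rfl⟩ Q ⟨R', hR', rfl⟩ h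
    rw [← Set.image_inter hf] at h
    rw [tp.eq_of_inter R hR R' hR' (h.of_image)]
  star := fun Q => if Q ⊆ Set.range f then (tp.star (f ⁻¹' Q)).map (Set.image f) else none
  star_dom := by
    intro Q h
    by_cases hQ : Q ⊆ Set.range f
    · simp only [if_pos hQ] at h
      have : tp.star (f ⁻¹' Q) ≠ none := fun h' => h (by simp [h'])
      refine ⟨f ⁻¹' Q, tp.star_dom _ this, ?_⟩
      exact Set.image_preimage_eq_iff.2 hQ
    · simp [hQ] at h
  star_ran := by
    intro P Q h
    by_cases hP : P ⊆ Set.range f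
    · simp only [if_pos hP, Option.map_eq_some_iff] at h
      obtain ⟨T, hT, rfl⟩ := h
      exact ⟨T, tp.star_ran _ T hT, rfl⟩
    · simp [hP] at h
  star_invol := by
    intro P Q h
    by_cases hP : P ⊆ Set.range f
    · simp only [if_pos hP, Option.map_eq_some_iff] at h
      obtain ⟨T, hT, rfl⟩ := h
      have h1 : f ⁻¹' (f '' T) = T := hf.preimage_image T
      simp only [if_pos (image_subset_range f T), h1, tp.star_invol _ T hT,
        Option.map_some]
      congr 1
      exact Set.image_preimage_eq_iff.2 hP
    · simp [hP] at h
  star_fixed := by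
    have key : ∀ P, (if P ⊆ Set.range f then (tp.star (f ⁻¹' P)).map (Set.image f) else none)
        = some P → tp.star (f ⁻¹' P) = some (f ⁻¹' P) := by
      intro P h
      by_cases hP : P ⊆ Set.range f
      · simp only [if_pos hP, Option.map_eq_some_iff] at h
        obtain ⟨T, hT, hTP⟩ := h
        have : T = f ⁻¹' P := by rw [← hTP, hf.preimage_image]
        rw [this] at hT; exact hT
      · simp [hP] at h
    intro P Q hP hQ
    have h1 := tp.star_fixed _ _ (key P hP) (key Q hQ)
    have hP' : P ⊆ Set.range f := by
      by_contra h; simp [h] at hP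
    have hQ' : Q ⊆ Set.range f := by
      by_contra h; simp [h] at hQ
    have := congrArg (Set.image f) h1
    rwa [Set.image_preimage_eq_iff.2 hP', Set.image_preimage_eq_iff.2 hQ'] at this

/-- Restrict a tagged partition of the range of an injection. -/
noncomputable def untransport (f : γ → α) (hf : Function.Injective f)
    (tp : TPS α (Set.range f)) : TPS γ univ where
  classes := (fun P => f ⁻¹' P) '' tp.classes
  subset_S := fun P _ => subset_univ P
  nonempty := by
    rintro P ⟨R, hR, rfl⟩
    obtain ⟨x, hx⟩ := tp.nonempty R hR
    obtain ⟨y, rfl⟩ := tp.subset_S R hR hx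
    exact ⟨y, hx⟩
  cover := by
    intro x _
    obtain ⟨R, hR, hx⟩ := tp.cover (f x) ⟨x, rfl⟩
    exact ⟨f ⁻¹' R, ⟨R, hR, rfl⟩, hx⟩
  eq_of_inter := by
    rintro P ⟨R, hR, rfl⟩ Q ⟨R', hR', rfl⟩ ⟨y, h1, h2⟩
    rw [tp.eq_of_inter R hR R' hR' ⟨f y, h1, h2⟩]
  star := fun R => (tp.star (f '' R)).map (fun P => f ⁻¹' P)
  star_dom := by
    intro R h
    have : tp.star (f '' R) ≠ none := fun h' => h (by simp [h'])
    exact ⟨f '' R, tp.star_dom _ this, hf.preimage_image R⟩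
  star_ran := by
    intro P Q h
    simp only [Option.map_eq_some_iff] at h
    obtain ⟨T, hT, rfl⟩ := h
    exact ⟨T, tp.star_ran _ T hT, rfl⟩
  star_invol := by
    intro P Q h
    simp only [Option.map_eq_some_iff] at h
    obtain ⟨T, hT, rfl⟩ := h
    have hTc : T ∈ tp.classes := tp.star_ran _ T hT
    show (tp.star (f '' (f ⁻¹' T))).map (fun P => f ⁻¹' P) = some P
    rw [Set.image_preimage_eq_iff.2 (tp.subset_S T hTc), tp.star_invol _ T hT,
      Option.map_some, hf.preimage_image]
  star_fixed := by
    have key : ∀ P, (tp.star (f '' P)).map (fun P => f ⁻¹' P) = some P →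
        tp.star (f '' P) = some (f '' P) := by
      intro P h
      simp only [Option.map_eq_some_iff] at h
      obtain ⟨T, hT, hTP⟩ := h
      have hTc : T ∈ tp.classes := tp.star_ran _ T hT
      rw [← hTP, Set.image_preimage_eq_iff.2 (tp.subset_S T hTc)] at hT ⊢
      exact hT
    intro P Q hP hQ
    have h1 := tp.star_fixed _ _ (key P hP) (key Q hQ)
    exact hf.image_injective h1

theorem untransport_transport (f : γ → α) (hf : Function.Injective f) (tp : TPS γ univ) :
    untransport f hf (transport f hf tp) = tp := by
  apply ext'
  · show (fun P => f ⁻¹' P) '' ((Set.image f) '' tp.classes) = tp.classes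
    rw [← Set.image_comp]
    calc ((fun P => f ⁻¹' P) ∘ Set.image f) '' tp.classes
        = id '' tp.classes := Set.image_congr (fun P _ => hf.preimage_image P)
      _ = tp.classes := Set.image_id _
  · funext R
    show ((if f '' R ⊆ Set.range f then (tp.star (f ⁻¹' (f '' R))).map (Set.image f)
      else none)).map (fun P => f ⁻¹' P) = tp.star R
    rw [if_pos (image_subset_range f R), hf.preimage_image]
    cases h : tp.star R with
    | none => simp
    | some T => simp [hf.preimage_image]

theorem transport_untransport (f : γ → α) (hf : Function.Injective f)
    (tp : TPS α (Set.range f)) : transport f hf (untransport f hf tp) = tp := by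
  apply ext'
  · show (Set.image f) '' ((fun P => f ⁻¹' P) '' tp.classes) = tp.classes
    rw [← Set.image_comp]
    calc (Set.image f ∘ fun P => f ⁻¹' P) '' tp.classes
        = id '' tp.classes := Set.image_congr
          (fun P hP => Set.image_preimage_eq_iff.2 (tp.subset_S P hP))
      _ = tp.classes := Set.image_id _
  · funext Q
    show (if Q ⊆ Set.range f then ((tp.star (f '' (f ⁻¹' Q))).map (fun P => f ⁻¹' P)).map
      (Set.image f) else none) = tp.star Q
    by_cases hQ : Q ⊆ Set.range f
    · rw [if_pos hQ, Set.image_preimage_eq_iff.2 hQ]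
      cases h : tp.star Q with
      | none => simp
      | some T =>
        have hTc : T ∈ tp.classes := tp.star_ran _ T h
        simp [Set.image_preimage_eq_iff.2 (tp.subset_S T hTc)]
    · rw [if_neg hQ]
      symm
      apply tp.star_none_of_not_mem
      intro hQc
      exact hQ (tp.subset_S Q hQc)

theorem transport_noFixed (f : γ → α) (hf : Function.Injective f) (tp : TPS γ univ)
    (h : tp.NoFixed) : (transport f hf tp).NoFixed := by
  intro Q hQ
  show False
  by_cases hQ' : Q ⊆ Set.range f
  · have : (if Q ⊆ Set.range f then (tp.star (f ⁻¹' Q)).map (Set.image f) else none)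
        = some Q := hQ
    rw [if_pos hQ'] at this
    simp only [Option.map_eq_some_iff] at this
    obtain ⟨T, hT, hTQ⟩ := this
    have : T = f ⁻¹' Q := by rw [← hTQ, hf.preimage_image]
    exact h (f ⁻¹' Q) (this ▸ hT)
  · have : (if Q ⊆ Set.range f then (tp.star (f ⁻¹' Q)).map (Set.image f) else none)
        = some Q := hQ
    simp [hQ'] at this

theorem untransport_noFixed (f : γ → α) (hf : Function.Injective f) (tp : TPS α (Set.range f))
    (h : tp.NoFixed) : (untransport f hf tp).NoFixed := by
  intro R hR
  show False
  have : (tp.star (f '' R)).map (fun P => f ⁻¹' P) = some R := hR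
  simp only [Option.map_eq_some_iff] at this
  obtain ⟨T, hT, hTR⟩ := this
  have hTc : T ∈ tp.classes := tp.star_ran _ T hT
  have : T = f '' R := by
    rw [← hTR, Set.image_preimage_eq_iff.2 (tp.subset_S T hTc)]
  exact h (f '' R) (this ▸ hT)

/-- The equivalence of no-fixed-point tagged partitions along an injection. -/
noncomputable def transportEquiv (f : γ → α) (hf : Function.Injective f) :
    {tp : TPS γ univ // tp.NoFixed} ≃ {tp : TPS α (Set.range f) // tp.NoFixed} where
  toFun tp := ⟨transport f hf tp.1, transport_noFixed f hf tp.1 tp.2⟩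
  invFun tp := ⟨untransport f hf tp.1, untransport_noFixed f hf tp.1 tp.2⟩
  left_inv tp := Subtype.ext (untransport_transport f hf tp.1)
  right_inv tp := Subtype.ext (transport_untransport f hf tp.1)

end Transport
section E1

/-- the set of fixed classes (at most one) -/
def fixedD (tp : TPS α S) : Set (Set α) := {P | tp.star P = some P}

theorem fixedD_sub (tp : TPS α S) : tp.fixedD ⊆ tp.classes := by
  intro P hP
  exact tp.star_dom P (by simp [fixedD] at hP; simp [hP])

theorem fixedD_closed (tp : TPS α S) : ∀ P ∈ tp.fixedD, ∀ Q, tp.star P = some Q → Q ∈ tp.fixedD := by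
  intro P hP Q h
  have hP' : tp.star P = some P := hP
  rw [hP'] at h
  injection h with h
  exact h ▸ hP

theorem noFixed_fixedD {tp : TPS α S} (h : tp.NoFixed) : tp.fixedD = ∅ := by
  ext P; simpa [fixedD] using h P

theorem fixedD_sUnion_subset (tp : TPS α S) : ⋃₀ tp.fixedD ⊆ S :=
  sUnion_subset (fun P hP => tp.subset_S P (tp.fixedD_sub hP))

theorem restrictAway_noFixed_of_fixedD (tp : TPS α S) :
    (tp.restrictAway tp.fixedD tp.fixedD_sub tp.fixedD_closed).NoFixed := by
  intro P hP
  show False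
  have : (if P ∈ tp.classes \ tp.fixedD then tp.star P else none) = some P := hP
  by_cases h : P ∈ tp.classes \ tp.fixedD
  · rw [if_pos h] at this
    exact h.2 this
  · simp [h] at this

/-- E1 forward map -/
noncomputable def e1fwd (tp : TPS α S) :
    Σ s : {s : Set α // s ⊆ S}, {tq : TPS α (S \ s.1) // tq.NoFixed} :=
  ⟨⟨⋃₀ tp.fixedD, tp.fixedD_sUnion_subset⟩,
    ⟨tp.restrictAway tp.fixedD tp.fixedD_sub tp.fixedD_closed,
      tp.restrictAway_noFixed_of_fixedD⟩⟩

/-- E1 inverse map -/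
noncomputable def e1inv (x : Σ s : {s : Set α // s ⊆ S}, {tq : TPS α (S \ s.1) // tq.NoFixed}) :
    TPS α S :=
  if hse : x.1.1 = ∅ then (x.2.1.copy (by rw [hse, diff_empty])) else
    ((singleF x.1.1 (nonempty_iff_ne_empty.2 hse)).disjUnion x.2.1 disjoint_sdiff_self_right
      x.2.2).copy (union_diff_cancel x.1.2)

theorem e1ext {x y : Σ s : {s : Set α // s ⊆ S}, {tq : TPS α (S \ s.1) // tq.NoFixed}}
    (h1 : x.1.1 = y.1.1) (h2 : x.2.1.classes = y.2.1.classes) (h3 : x.2.1.star = y.2.1.star) :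
    x = y := by
  obtain ⟨⟨s, hs⟩, ⟨tq, hq⟩⟩ := x
  obtain ⟨⟨t, ht⟩, ⟨tr, hr⟩⟩ := y
  dsimp at h1 h2 h3
  subst h1
  exact congrArg (Sigma.mk _) (Subtype.ext (ext' h2 h3))

theorem e1_left (tp : TPS α S) : e1inv (e1fwd tp) = tp := by
  by_cases hD : ∃ C, tp.star C = some C
  · obtain ⟨C, hC⟩ := hD
    have hDe : tp.fixedD = {C} := by
      ext Q
      simp only [fixedD, mem_setOf_eq, mem_singleton_iff]
      exact ⟨fun h => tp.star_fixed Q C h hC, fun h => h ▸ hC⟩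
    have hsU : ⋃₀ tp.fixedD = C := by rw [hDe, sUnion_singleton]
    have hCc : C ∈ tp.classes := tp.star_dom C (by simp [hC])
    have hne : ⋃₀ tp.fixedD ≠ ∅ := by
      rw [hsU]
      exact (tp.nonempty C hCc).ne_empty
    rw [e1inv]
    rw [dif_neg (show ¬ (e1fwd tp).1.1 = ∅ from hne)]
    apply ext'
    · rw [copy_classes]
      show (singleF (⋃₀ tp.fixedD) _).classes ∪ (tp.classes \ tp.fixedD) = tp.classes
      show {⋃₀ tp.fixedD} ∪ (tp.classes \ tp.fixedD) = tp.classes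
      rw [hsU, hDe]
      rw [Set.singleton_union, Set.insert_diff_singleton, Set.insert_eq_self.2 hCc]
    · rw [copy_star]
      funext P
      show (if P ∈ (singleF (⋃₀ tp.fixedD) _).classes
          then (singleF (⋃₀ tp.fixedD) _).star P
          else (if P ∈ tp.classes \ tp.fixedD then tp.star P else none)) = tp.star P
      show (if P ∈ ({⋃₀ tp.fixedD} : Set (Set α))
          then (if P = ⋃₀ tp.fixedD then some (⋃₀ tp.fixedD) else none)
          else (if P ∈ tp.classes \ tp.fixedD then tp.star P else none)) = tp.star P
      simp only [hDe, sUnion_singleton, mem_singleton_iff]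
      by_cases h1 : P = C
      · subst h1
        simp [hC]
      · rw [if_neg h1]
        by_cases h2 : P ∈ tp.classes
        · rw [if_pos ⟨h2, by simpa using h1⟩]
        · rw [if_neg (fun h => h2 h.1), tp.star_none_of_not_mem h2]
  · have hDe : tp.fixedD = ∅ := by
      ext Q
      simp only [fixedD, mem_setOf_eq, mem_empty_iff_false, iff_false]
      exact fun h => hD ⟨Q, h⟩
    have hse : ⋃₀ tp.fixedD = ∅ := by rw [hDe, sUnion_empty]
    rw [e1inv]
    rw [dif_pos (show (e1fwd tp).1.1 = ∅ from hse)]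
    apply ext'
    · rw [copy_classes]
      show tp.classes \ tp.fixedD = tp.classes
      rw [hDe, diff_empty]
    · rw [copy_star]
      funext P
      show (if P ∈ tp.classes \ tp.fixedD then tp.star P else none) = tp.star P
      rw [hDe]
      by_cases h2 : P ∈ tp.classes
      · rw [if_pos (show P ∈ tp.classes \ ∅ from ⟨h2, notMem_empty P⟩)]
      · rw [if_neg (show P ∉ tp.classes \ ∅ from fun hc => h2 hc.1),
          tp.star_none_of_not_mem h2]

theorem e1_right (x : Σ s : {s : Set α // s ⊆ S}, {tq : TPS α (S \ s.1) // tq.NoFixed}) :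
    e1fwd (e1inv x) = x := by
  obtain ⟨⟨s, hs⟩, ⟨tq, hq⟩⟩ := x
  by_cases hse : s = ∅
  · subst hse
    rw [e1inv]
    dsimp only
    rw [dif_pos rfl]
    have hDe : (tq.copy (by rw [diff_empty]) : TPS α S).fixedD = ∅ := by
      apply noFixed_fixedD
      exact copy_noFixed _ _ hq
    apply e1ext
    · show ⋃₀ (tq.copy _).fixedD = ∅
      rw [hDe, sUnion_empty]
    · show (tq.copy _).classes \ (tq.copy _).fixedD = tq.classes
      rw [hDe, diff_empty, copy_classes]
    · funext P
      show (if P ∈ (tq.copy _).classes \ (tq.copy _).fixedD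
          then (tq.copy _).star P else none) = tq.star P
      rw [hDe]
      by_cases h2 : P ∈ tq.classes
      · rw [if_pos (by rw [copy_classes]; exact ⟨h2, notMem_empty P⟩), copy_star]
      · rw [if_neg (by rw [copy_classes]; exact fun hc => h2 hc.1),
          tq.star_none_of_not_mem h2]
  · rw [e1inv]
    dsimp only
    rw [dif_neg hse]
    set hne : s.Nonempty := nonempty_iff_ne_empty.2 hse with hne_def
    set u : TPS α S := ((singleF s hne).disjUnion tq disjoint_sdiff_self_right hq).copy
      (union_diff_cancel hs) with hu
    have hstar : ∀ P, u.star P = if P ∈ ({s} : Set (Set α))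
        then (if P = s then some s else none) else tq.star P := by
      intro P; rw [hu, copy_star]; rfl
    have hscl : s ∉ tq.classes := by
      intro h
      obtain ⟨x, hx⟩ := hne
      exact (tq.subset_S s h hx).2 hx
    have hDu : u.fixedD = {s} := by
      ext P
      simp only [fixedD, mem_setOf_eq, mem_singleton_iff, hstar P]
      constructor
      · intro h
        by_cases h1 : P = s
        · exact h1
        · rw [if_neg h1] at h
          exact absurd h (hq P)
      · rintro rfl
        simp
    have hucl : u.classes = {s} ∪ tq.classes := by rw [hu, copy_classes]; rfl
    apply e1ext
    · show ⋃₀ u.fixedD = s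
      rw [hDu, sUnion_singleton]
    · show u.classes \ u.fixedD = tq.classes
      rw [hDu, hucl]
      rw [Set.singleton_union, Set.insert_diff_self_of_notMem hscl]
    · funext P
      show (if P ∈ u.classes \ u.fixedD then u.star P else none) = tq.star P
      rw [hDu, hucl, hstar P]
      by_cases h1 : P = s
      · subst h1
        rw [if_neg (fun h => h.2 rfl), (tq.star_none_of_not_mem hscl)]
      · by_cases h2 : P ∈ tq.classes
        · rw [if_pos ⟨Or.inr h2, by simpa using h1⟩, if_neg (by simpa using h1)]
        · rw [if_neg ?_, tq.star_none_of_not_mem h2]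
          rintro ⟨(h3 | h3), h4⟩
          · exact h1 h3
          · exact h2 h3

/-- E1: split off the fixed class. -/
noncomputable def E1 : TPS α S ≃ Σ s : {s : Set α // s ⊆ S}, {tq : TPS α (S \ s.1) // tq.NoFixed} where
  toFun := e1fwd
  invFun := e1inv
  left_inv := e1_left
  right_inv := e1_right

end E1
section E2

theorem restrictAway_noFixed (tp : TPS α S) (D : Set (Set α)) (hD : D ⊆ tp.classes)
    (hcl : ∀ P ∈ D, ∀ Q, tp.star P = some Q → Q ∈ D) (h : tp.NoFixed) :
    (tp.restrictAway D hD hcl).NoFixed := by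
  intro P hP
  show False
  have : (if P ∈ tp.classes \ D then tp.star P else none) = some P := hP
  by_cases h1 : P ∈ tp.classes \ D
  · rw [if_pos h1] at this; exact h P this
  · simp [h1] at this

theorem disjUnion_noFixed (tp : TPS α S) (tq : TPS α T) (hST : Disjoint S T) (hq : tq.NoFixed)
    (hp : tp.NoFixed) : (tp.disjUnion tq hST hq).NoFixed := by
  intro P hP
  show False
  have : (if P ∈ tp.classes then tp.star P else tq.star P) = some P := hP
  by_cases h1 : P ∈ tp.classes
  · rw [if_pos h1] at this; exact hp P this
  · rw [if_neg h1] at this; exact hq P this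

variable (a : α)

/-- local structure on the component: single untagged class or a matched pair -/
noncomputable def e2loc (s P : Set α) (haP : a ∈ P) (hPs : P ⊆ s) : TPS α s :=
  if h : P = s then singleU s (Set.nonempty_of_mem (h ▸ haP))
  else (pairT P (s \ P) (Set.nonempty_of_mem haP)
    (Set.diff_nonempty.2 (fun hsP => h (hPs.antisymm hsP)))
    disjoint_sdiff_self_right).copy (union_diff_cancel hPs)

theorem e2loc_noFixed (s P : Set α) (haP : a ∈ P) (hPs : P ⊆ s) :
    (e2loc a s P haP hPs).NoFixed := by
  rw [e2loc]
  split
  · exact singleU_noFixed _ _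
  · exact copy_noFixed _ _ (pairT_noFixed _ _ _ _ _)

variable {tp : TPS α S}

/-- the component of `a`: its class together with the starred class -/
noncomputable def sOf (tp : TPS α S) (a : α) : Set α :=
  tp.classOf a ∪ (tp.star (tp.classOf a)).getD ∅

/-- the classes in the component of `a` -/
def DOf (tp : TPS α S) (a : α) : Set (Set α) :=
  {R | R = tp.classOf a ∨ tp.star (tp.classOf a) = some R}

theorem sUnion_DOf (tp : TPS α S) (a : α) : ⋃₀ tp.DOf a = tp.sOf a := by
  cases h : tp.star (tp.classOf a) with
  | none =>
    have : tp.DOf a = {tp.classOf a} := by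
      ext R; simp [DOf, h]
    rw [this, sUnion_singleton, sOf, h]
    simp
  | some Q =>
    have : tp.DOf a = {tp.classOf a, Q} := by
      ext R
      simp only [DOf, h, mem_setOf_eq, Option.some.injEq, mem_insert_iff, mem_singleton_iff]
      exact or_congr Iff.rfl eq_comm
    rw [this, Set.sUnion_pair, sOf, h]
    rfl

theorem DOf_sub (ha : a ∈ S) : tp.DOf a ⊆ tp.classes := by
  rintro R (rfl | hR)
  · exact (tp.classOf_spec ha).1
  · exact tp.star_ran _ R hR

theorem DOf_closed : ∀ P ∈ tp.DOf a, ∀ Q, tp.star P = some Q → Q ∈ tp.DOf a := by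
  rintro P (rfl | hP) Q h
  · exact Or.inr h
  · have h2 := tp.star_invol _ P hP
    rw [h2] at h
    injection h with h
    exact Or.inl h.symm

theorem sOf_sub (ha : a ∈ S) : tp.sOf a ⊆ S := by
  rw [← sUnion_DOf]
  exact sUnion_subset (fun P hP => tp.subset_S P (DOf_sub a ha hP))

variable {a}

/-- The target of E2. -/
abbrev E2T (a : α) (S : Set α) :=
  Σ sp : {q : Set α × Set α // a ∈ q.2 ∧ q.2 ⊆ q.1 ∧ q.1 ⊆ S},
    {tq : TPS α (S \ sp.1.1) // tq.NoFixed}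

/-- E2 forward map -/
noncomputable def e2fwd (ha : a ∈ S) (x : {tp : TPS α S // tp.NoFixed}) : E2T a S :=
  ⟨⟨(x.1.sOf a, x.1.classOf a),
    ⟨(x.1.classOf_spec ha).2, subset_union_left, sOf_sub a ha⟩⟩,
    ⟨(x.1.restrictAway (x.1.DOf a) (DOf_sub a ha) (DOf_closed a)).copy
        (by rw [sUnion_DOf]),
      copy_noFixed _ _ (restrictAway_noFixed _ _ _ _ x.2)⟩⟩

/-- E2 inverse map -/
noncomputable def e2inv (ha : a ∈ S) (y : E2T a S) : {tp : TPS α S // tp.NoFixed} :=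
  ⟨((e2loc a y.1.1.1 y.1.1.2 y.1.2.1 y.1.2.2.1).disjUnion y.2.1 disjoint_sdiff_self_right
      y.2.2).copy (union_diff_cancel y.1.2.2.2),
    copy_noFixed _ _
      (disjUnion_noFixed _ _ _ _ (e2loc_noFixed a _ _ _ _))⟩

theorem e2ext {x y : E2T a S} (h1 : x.1.1 = y.1.1) (h2 : x.2.1.classes = y.2.1.classes)
    (h3 : x.2.1.star = y.2.1.star) : x = y := by
  obtain ⟨⟨s, hs⟩, ⟨tq, hq⟩⟩ := x
  obtain ⟨⟨t, ht⟩, ⟨tr, hr⟩⟩ := y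
  dsimp at h1 h2 h3
  subst h1
  exact congrArg (Sigma.mk _) (Subtype.ext (ext' h2 h3))

theorem e2_left (ha : a ∈ S) (x : {tp : TPS α S // tp.NoFixed}) :
    e2inv ha (e2fwd ha x) = x := by
  obtain ⟨tp, hnf⟩ := x
  have hCc : tp.classOf a ∈ tp.classes := (tp.classOf_spec ha).1
  have haC : a ∈ tp.classOf a := (tp.classOf_spec ha).2
  apply Subtype.ext
  show ((e2loc a (tp.sOf a) (tp.classOf a) _ _).disjUnion
      ((tp.restrictAway (tp.DOf a) _ _).copy _) _ _).copy _ = tp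
  cases h : tp.star (tp.classOf a) with
  | none =>
    have hD : tp.DOf a = {tp.classOf a} := by ext R; simp [DOf, h]
    have hs : tp.sOf a = tp.classOf a := by rw [sOf, h]; simp
    unfold e2loc
    rw [dif_pos hs.symm]
    apply ext'
    · erw [copy_classes]
      show {tp.sOf a} ∪ ((tp.restrictAway (tp.DOf a) _ _).copy _).classes = tp.classes
      erw [copy_classes]
      show {tp.sOf a} ∪ (tp.classes \ tp.DOf a) = tp.classes
      rw [hs, hD, Set.singleton_union, Set.insert_diff_singleton, Set.insert_eq_self.2 hCc]
    · erw [copy_star]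
      funext R
      show (if R ∈ ({tp.sOf a} : Set (Set α)) then none
          else ((tp.restrictAway (tp.DOf a) _ _).copy _).star R) = tp.star R
      erw [copy_star]
      show (if R ∈ ({tp.sOf a} : Set (Set α)) then none
          else (if R ∈ tp.classes \ tp.DOf a then tp.star R else none)) = tp.star R
      by_cases h1 : R = tp.classOf a
      · subst h1
        rw [if_pos (by rw [hs]; rfl), h]
      · rw [if_neg (by rw [hs]; simpa using h1)]
        by_cases h2 : R ∈ tp.classes
        · rw [if_pos ⟨h2, by rw [hD]; simpa using h1⟩]
        · rw [if_neg (fun hc => h2 hc.1), tp.star_none_of_not_mem h2]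
  | some Q =>
    have hQc : Q ∈ tp.classes := tp.star_ran _ Q h
    have hQC : Q ≠ tp.classOf a := by
      intro h1
      rw [h1] at h
      exact hnf _ h
    have hD : tp.DOf a = {tp.classOf a, Q} := by
      ext R
      simp only [DOf, h, mem_setOf_eq, Option.some.injEq, mem_insert_iff, mem_singleton_iff]
      exact or_congr Iff.rfl eq_comm
    have hs : tp.sOf a = tp.classOf a ∪ Q := by rw [sOf, h]; rfl
    have hdisj : tp.classOf a ∩ Q = ∅ := tp.disj hCc hQc (Ne.symm hQC)
    have hCs : tp.classOf a ≠ tp.sOf a := by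
      intro h1
      obtain ⟨x, hx⟩ := tp.nonempty Q hQc
      have : x ∈ tp.classOf a := by
        rw [h1, hs]; exact Or.inr hx
      exact Set.eq_empty_iff_forall_notMem.1 hdisj x ⟨this, hx⟩
    have hsdiff : tp.sOf a \ tp.classOf a = Q := by
      rw [hs]
      ext x
      simp only [mem_diff, mem_union]
      constructor
      · rintro ⟨(h1 | h1), h2⟩
        · exact absurd h1 h2
        · exact h1
      · intro hx
        exact ⟨Or.inr hx, fun hc => Set.eq_empty_iff_forall_notMem.1 hdisj x ⟨hc, hx⟩⟩
    unfold e2loc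
    rw [dif_neg hCs]
    apply ext'
    · erw [copy_classes]
      show ((pairT (tp.classOf a) (tp.sOf a \ tp.classOf a) _ _ _).copy _).classes ∪
        ((tp.restrictAway (tp.DOf a) _ _).copy _).classes = tp.classes
      erw [copy_classes, copy_classes]
      show {tp.classOf a, tp.sOf a \ tp.classOf a} ∪ (tp.classes \ tp.DOf a) = tp.classes
      rw [hsdiff, hD]
      ext R
      simp only [mem_union, mem_insert_iff, mem_singleton_iff, mem_diff]
      constructor
      · rintro ((rfl | rfl) | ⟨hR, _⟩) <;> first | exact hCc | exact hQc | exact hR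
      · intro hR
        by_cases h1 : R = tp.classOf a ∨ R = Q
        · exact Or.inl h1
        · push_neg at h1
          exact Or.inr ⟨hR, fun hc => absurd hc (by simpa using h1)⟩
    · erw [copy_star]
      funext R
      erw [disjUnion_star]
      by_cases h1 : R = tp.classOf a
      · subst h1
        rw [if_pos (by rw [copy_classes, pairT_classes]; exact Or.inl rfl),
          copy_star, pairT_star, if_pos rfl, h, hsdiff]
      · by_cases h2 : R = Q
        · subst h2
          rw [if_pos (by rw [copy_classes, pairT_classes]; exact Or.inr hsdiff.symm),
            copy_star, pairT_star, if_neg h1, if_pos hsdiff.symm, tp.star_invol _ _ h]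
        · have hnm : R ∉ ({tp.classOf a, tp.sOf a \ tp.classOf a} : Set (Set α)) := by
            rintro (h3 | h3)
            · exact h1 h3
            · exact h2 (by rw [h3, hsdiff])
          erw [if_neg (by rw [copy_classes, pairT_classes]; exact hnm), copy_star,
            restrictAway_star]
          by_cases h3 : R ∈ tp.classes
          · rw [if_pos ⟨h3, by rw [hD]; simp [h1, h2]⟩]
          · rw [if_neg (fun hc => h3 hc.1), tp.star_none_of_not_mem h3]

theorem e2_right (ha : a ∈ S) (y : E2T a S) : e2fwd ha (e2inv ha y) = y := by
  obtain ⟨⟨⟨s, P⟩, ⟨haP, hPs, hsS⟩⟩, ⟨tq, hq⟩⟩ := y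
  dsimp only [e2fwd, e2inv]
  set L : TPS α s := e2loc a s P haP hPs with hL
  set u : TPS α S := (L.disjUnion tq disjoint_sdiff_self_right hq).copy
    (union_diff_cancel hsS) with hu
  have hucl : u.classes = L.classes ∪ tq.classes := by rw [hu, copy_classes, disjUnion_classes]
  have hustar : ∀ R, u.star R =
      if R ∈ L.classes then L.star R else tq.star R := by
    intro R; rw [hu, copy_star, disjUnion_star]
  have hPL : P ∈ L.classes := by
    rw [hL, e2loc]
    by_cases h : P = s
    · rw [dif_pos h]; exact h
    · rw [dif_neg h, copy_classes, pairT_classes]; exact Or.inl rfl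
  have hCu : u.classOf a = P := by
    apply classOf_eq
    · rw [hucl]; exact Or.inl hPL
    · exact haP
  have hnotq : ∀ R ∈ L.classes, R ∉ tq.classes := by
    intro R hR hR'
    obtain ⟨x, hx⟩ := L.nonempty R hR
    exact (tq.subset_S R hR' hx).2 (L.subset_S R hR hx)
  by_cases hcase : P = s
  · subst hcase
    have hLs : L = singleU P (Set.nonempty_of_mem haP) := by rw [hL, e2loc, dif_pos rfl]
    have hsnot : P ∉ tq.classes := hnotq P hPL
    have hustarC : u.star P = none := by
      rw [hustar, if_pos hPL, hLs, singleU_star]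
    have hsu : u.sOf a = P := by
      rw [sOf, hCu, hustarC, Option.getD_none, union_empty]
    have hDu : u.DOf a = {P} := by
      ext R; simp [DOf, hCu, hustarC]
    apply e2ext
    · show (u.sOf a, u.classOf a) = (P, P)
      rw [hsu, hCu]
    · rw [copy_classes, restrictAway_classes, hDu, hucl, hLs, singleU_classes,
        Set.singleton_union, Set.insert_diff_self_of_notMem hsnot]
    · funext R
      rw [copy_star, restrictAway_star, hDu, hucl, hLs, singleU_classes]
      by_cases h1 : R = P
      · subst h1
        rw [if_neg (fun hc => hc.2 rfl), tq.star_none_of_not_mem hsnot]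
      · by_cases h2 : R ∈ tq.classes
        · rw [if_pos ⟨Or.inr h2, by simpa using h1⟩, hustar, hLs, singleU_classes,
            if_neg (by simpa using h1)]
        · rw [if_neg ?_, tq.star_none_of_not_mem h2]
          rintro ⟨(h3 | h3), h4⟩
          · exact h1 (by simpa using h3)
          · exact h2 h3
  · have hLp : L = (pairT P (s \ P) (Set.nonempty_of_mem haP)
        (Set.diff_nonempty.2 (fun hsP => hcase (hPs.antisymm hsP)))
        disjoint_sdiff_self_right).copy (union_diff_cancel hPs) := by
      rw [hL, e2loc, dif_neg hcase]
    have hLcl : L.classes = {P, s \ P} := by rw [hLp, copy_classes, pairT_classes]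
    have hLstar : ∀ R, L.star R = if R = P then some (s \ P)
        else if R = s \ P then some P else none := by
      intro R; rw [hLp, copy_star, pairT_star]
    have hPsP : P ≠ s \ P := fun h1 => (h1 ▸ haP).2 haP
    have hustarC : u.star P = some (s \ P) := by
      rw [hustar, if_pos hPL, hLstar, if_pos rfl]
    have hsu : u.sOf a = s := by
      rw [sOf, hCu, hustarC]
      show P ∪ (s \ P) = s
      exact union_diff_cancel hPs
    have hDu : u.DOf a = {P, s \ P} := by
      ext R
      simp only [DOf, hCu, hustarC, mem_setOf_eq, Option.some.injEq, mem_insert_iff,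
        mem_singleton_iff]
      exact or_congr Iff.rfl eq_comm
    apply e2ext
    · show (u.sOf a, u.classOf a) = (s, P)
      rw [hsu, hCu]
    · rw [copy_classes, restrictAway_classes, hDu, hucl, hLcl]
      ext R
      simp only [mem_diff, mem_union, mem_insert_iff, mem_singleton_iff]
      constructor
      · rintro ⟨(h1 | h1), h2⟩
        · exact absurd h1 h2
        · exact h1
      · intro hR
        have h1 : R ≠ P := fun hc => hnotq P (by rw [hLcl]; exact Or.inl rfl) (hc ▸ hR)
        have h2 : R ≠ s \ P := fun hc =>
          hnotq (s \ P) (by rw [hLcl]; exact Or.inr rfl) (hc ▸ hR)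
        exact ⟨Or.inr hR, by simp [h1, h2]⟩
    · funext R
      rw [copy_star, restrictAway_star, hDu, hucl, hLcl]
      by_cases h1 : R = P ∨ R = s \ P
      · rw [if_neg (fun hc => hc.2 (by simpa using h1))]
        rcases h1 with rfl | rfl
        · rw [tq.star_none_of_not_mem (hnotq _ (by rw [hLcl]; exact Or.inl rfl))]
        · rw [tq.star_none_of_not_mem (hnotq _ (by rw [hLcl]; exact Or.inr rfl))]
      · push_neg at h1
        by_cases h2 : R ∈ tq.classes
        · rw [if_pos ⟨Or.inr h2, by simp [h1.1, h1.2]⟩, hustar,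
            if_neg (by rw [hLcl]; simp [h1.1, h1.2])]
        · rw [if_neg ?_, tq.star_none_of_not_mem h2]
          rintro ⟨(h3 | h3), h4⟩
          · exact h4 (by simpa using h3)
          · exact h2 h3

/-- E2: split off the component of `a`. -/
noncomputable def E2 (ha : a ∈ S) : {tp : TPS α S // tp.NoFixed} ≃ E2T a S where
  toFun := e2fwd ha
  invFun := e2inv ha
  left_inv := e2_left ha
  right_inv := e2_right ha

end E2
end TPS
section Counting

open Set TPS

attribute [local instance] Classical.propDecidable

theorem natCard_sigma {ι : Type} [Fintype ι] (F : ι → Type) [∀ i, Finite (F i)] :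
    Nat.card (Σ i, F i) = ∑ i, Nat.card (F i) := by
  letI := fun i => Fintype.ofFinite (F i)
  simp [Nat.card_eq_fintype_card, Fintype.card_sigma]

/-- Tagged partitions as `TPS`. -/
def taggedEquiv (n : ℕ) : TaggedPartition n ≃ TPS (Fin n) Set.univ where
  toFun tp := ⟨tp.classes, fun P _ => Set.subset_univ P, tp.classes_nonempty,
    fun i _ => tp.cover i, tp.eq_of_inter, tp.star, tp.star_dom, tp.star_ran,
    tp.star_invol, tp.star_fixed⟩
  invFun tq := ⟨tq.classes, tq.nonempty, fun i => tq.cover i (Set.mem_univ i),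
    tq.eq_of_inter, tq.star, tq.star_dom, tq.star_ran, tq.star_invol, tq.star_fixed⟩
  left_inv tp := rfl
  right_inv tq := rfl

/-- number of no-fixed-point tagged partitions -/
noncomputable def qc (n : ℕ) : ℕ := Nat.card {tp : TPS (Fin n) Set.univ // tp.NoFixed}

theorem card_nofixed {N : ℕ} (S : Set (Fin N)) :
    Nat.card {tp : TPS (Fin N) S // tp.NoFixed} = qc S.ncard := by
  haveI : Fintype ↥S := Fintype.ofFinite _
  have h1 : Fintype.card ↥S = S.ncard := by
    rw [← Nat.card_coe_set_eq, Nat.card_eq_fintype_card]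
  let e : Fin S.ncard ≃ ↥S := (Fintype.equivFinOfCardEq h1).symm
  have hinj : Function.Injective (fun i => (e i : Fin N)) :=
    Subtype.val_injective.comp e.injective
  have hrange : Set.range (fun i => (e i : Fin N)) = S := by
    have : (fun i => (e i : Fin N)) = Subtype.val ∘ e := rfl
    rw [this, Set.range_comp, Equiv.range_eq_univ, Set.image_univ, Subtype.range_coe]
  have E := TPS.transportEquiv (fun i => (e i : Fin N)) hinj
  rw [hrange] at E
  rw [← Nat.card_congr E]
  rfl

theorem sum_over_subsets {N : ℕ} (B : Finset (Fin N)) (h : ℕ → ℕ) :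
    ∑ t : {t : Set (Fin N) // t ⊆ ↑B}, h t.1.ncard
      = ∑ j ∈ Finset.range (B.card + 1), B.card.choose j * h j := by
  let e : {u : Finset (Fin N) // u ⊆ B} ≃ {t : Set (Fin N) // t ⊆ ↑B} :=
    { toFun := fun u => ⟨(u.1 : Set (Fin N)), Finset.coe_subset.2 u.2⟩
      invFun := fun t => ⟨t.1.toFinset, Set.toFinset_subset.2 t.2⟩
      left_inv := fun u => Subtype.ext (by simp)
      right_inv := fun t => Subtype.ext (by simp) }
  rw [← Equiv.sum_comp e (fun t : {t : Set (Fin N) // t ⊆ ↑B} => h t.1.ncard)]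
  have : ∀ u : {u : Finset (Fin N) // u ⊆ B}, h ((e u).1.ncard) = h u.1.card := by
    intro u
    congr 1
    show ((u.1 : Set (Fin N))).ncard = u.1.card
    exact Set.ncard_coe_finset u.1
  rw [Finset.sum_congr rfl (fun u _ => this u)]
  rw [← Finset.sum_subtype B.powerset (fun u => Finset.mem_powerset) (fun u => h u.card)]
  rw [Finset.sum_powerset_apply_card (fun j => h j) (x := B)]
  simp [smul_eq_mul]

theorem card_subsets_between {N : ℕ} (s : Set (Fin N)) (a : Fin N) (ha : a ∈ s) :
    Nat.card {P : Set (Fin N) // a ∈ P ∧ P ⊆ s} = 2 ^ (s.ncard - 1) := by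
  have hanot : a ∉ s \ {a} := fun h => h.2 rfl
  let e : {P : Set (Fin N) // a ∈ P ∧ P ⊆ s} ≃ {t : Set (Fin N) // t ⊆ s \ {a}} :=
    { toFun := fun P => ⟨P.1 \ {a}, Set.diff_subset_diff_left P.2.2⟩
      invFun := fun t => ⟨insert a t.1,
        ⟨Set.mem_insert a t.1, Set.insert_subset ha (t.2.trans Set.diff_subset)⟩⟩
      left_inv := fun P => Subtype.ext (by
        show insert a (P.1 \ {a}) = P.1
        rw [Set.insert_diff_singleton, Set.insert_eq_self.2 P.2.1])
      right_inv := fun t => Subtype.ext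
        (Set.insert_diff_self_of_notMem (fun h => (t.2 h).2 rfl)) }
  rw [Nat.card_congr e]
  let B : Finset (Fin N) := (s \ {a}).toFinset
  let e2 : {u : Finset (Fin N) // u ⊆ B} ≃ {t : Set (Fin N) // t ⊆ s \ {a}} :=
    { toFun := fun u => ⟨(u.1 : Set (Fin N)), by
        have := Finset.coe_subset.2 u.2
        rwa [Set.coe_toFinset] at this⟩
      invFun := fun t => ⟨t.1.toFinset, Set.toFinset_subset_toFinset.2 t.2⟩
      left_inv := fun u => Subtype.ext (by simp)
      right_inv := fun t => Subtype.ext (by simp) }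
  rw [← Nat.card_congr e2, Nat.card_eq_fintype_card,
    Fintype.card_of_subtype B.powerset (fun u => Finset.mem_powerset),
    Finset.card_powerset]
  congr 1
  show (s \ {a}).toFinset.card = s.ncard - 1
  rw [← Set.ncard_eq_toFinset_card' (s \ {a}),
    Set.ncard_diff (Set.singleton_subset_iff.2 ha), Set.ncard_singleton]

theorem p_eq (n : ℕ) : Nat.card (TaggedPartition n)
    = ∑ j ∈ Finset.range (n + 1), n.choose j * qc (n - j) := by
  rw [Nat.card_congr (taggedEquiv n), Nat.card_congr (TPS.E1 (S := (Set.univ : Set (Fin n))))]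
  haveI : Fintype {s : Set (Fin n) // s ⊆ Set.univ} := Fintype.ofFinite _
  rw [natCard_sigma]
  have step1 : ∀ s : {s : Set (Fin n) // s ⊆ Set.univ},
      Nat.card {tq : TPS (Fin n) (Set.univ \ s.1) // tq.NoFixed} = qc (n - s.1.ncard) := by
    intro s
    rw [card_nofixed, Set.ncard_diff s.2, Set.ncard_univ, Nat.card_eq_fintype_card,
      Fintype.card_fin]
  rw [Finset.sum_congr rfl (fun s _ => step1 s)]
  let e : {t : Set (Fin n) // t ⊆ (↑(Finset.univ : Finset (Fin n)) : Set (Fin n))} ≃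
      {s : Set (Fin n) // s ⊆ Set.univ} := by
    apply Equiv.subtypeEquiv (Equiv.refl _)
    intro t
    simp
  rw [← Equiv.sum_comp e (fun s : {s : Set (Fin n) // s ⊆ Set.univ} => qc (n - s.1.ncard))]
  have : ∀ t : {t : Set (Fin n) // t ⊆ (↑(Finset.univ : Finset (Fin n)) : Set (Fin n))},
      qc (n - (e t).1.ncard) = qc (n - t.1.ncard) := fun t => rfl
  rw [Finset.sum_congr rfl (fun t _ => this t)]
  rw [sum_over_subsets (Finset.univ : Finset (Fin n)) (fun j => qc (n - j))]
  simp [Finset.card_univ]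

end Counting
section Counting2

open Set TPS

attribute [local instance] Classical.propDecidable

theorem qc_zero : qc 0 = 1 := by
  rw [qc, Nat.card_eq_one_iff_unique]
  constructor
  · constructor
    intro x y
    apply Subtype.ext
    apply TPS.ext'
    · have h : ∀ tp : TPS (Fin 0) Set.univ, tp.classes = ∅ := by
        intro tp
        ext P
        simp only [mem_empty_iff_false, iff_false]
        intro hP
        obtain ⟨i, _⟩ := tp.nonempty P hP
        exact Fin.elim0 i
      rw [h, h]
    · funext P
      rw [x.1.star_none_of_not_mem, y.1.star_none_of_not_mem]
      · intro h
        obtain ⟨i, _⟩ := y.1.nonempty P h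
        exact Fin.elim0 i
      · intro h
        obtain ⟨i, _⟩ := x.1.nonempty P h
        exact Fin.elim0 i
  · refine ⟨⟨⟨∅, by simp, by simp, fun i => Fin.elim0 i, by simp, fun _ => none,
      by simp, by simp, by simp, by simp⟩, fun P h => by simp at h⟩⟩

theorem qc_succ (n : ℕ) :
    qc (n + 1) = ∑ j ∈ Finset.range (n + 1), n.choose j * (2 ^ j * qc (n - j)) := by
  have ha : (0 : Fin (n + 1)) ∈ (Set.univ : Set (Fin (n + 1))) := Set.mem_univ _
  rw [qc, Nat.card_congr (TPS.E2 ha)]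
  rw [show TPS.E2T (0 : Fin (n + 1)) (Set.univ : Set (Fin (n + 1))) =
    (Σ sp : {q : Set (Fin (n + 1)) × Set (Fin (n + 1)) //
      (0 : Fin (n + 1)) ∈ q.2 ∧ q.2 ⊆ q.1 ∧ q.1 ⊆ Set.univ},
      {tq : TPS (Fin (n + 1)) (Set.univ \ sp.1.1) // tq.NoFixed}) from rfl]
  rw [natCard_sigma]
  have step1 : ∀ sp : {q : Set (Fin (n + 1)) × Set (Fin (n + 1)) //
      (0 : Fin (n + 1)) ∈ q.2 ∧ q.2 ⊆ q.1 ∧ q.1 ⊆ Set.univ},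
      Nat.card {tq : TPS (Fin (n + 1)) (Set.univ \ sp.1.1) // tq.NoFixed}
        = qc (n + 1 - sp.1.1.ncard) := by
    intro sp
    rw [card_nofixed, Set.ncard_diff sp.2.2.2, Set.ncard_univ, Nat.card_eq_fintype_card,
      Fintype.card_fin]
  rw [Finset.sum_congr rfl (fun sp _ => step1 sp)]
  let EP : {q : Set (Fin (n + 1)) × Set (Fin (n + 1)) //
      (0 : Fin (n + 1)) ∈ q.2 ∧ q.2 ⊆ q.1 ∧ q.1 ⊆ Set.univ} ≃
      Σ s : {s : Set (Fin (n + 1)) // (0 : Fin (n + 1)) ∈ s},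
        {P : Set (Fin (n + 1)) // (0 : Fin (n + 1)) ∈ P ∧ P ⊆ s.1} :=
    { toFun := fun x => ⟨⟨x.1.1, x.2.2.1 x.2.1⟩, ⟨x.1.2, ⟨x.2.1, x.2.2.1⟩⟩⟩
      invFun := fun y => ⟨(y.1.1, y.2.1), ⟨y.2.2.1, y.2.2.2, Set.subset_univ _⟩⟩
      left_inv := by rintro ⟨⟨s, P⟩, ⟨h1, h2, h3⟩⟩; rfl
      right_inv := by rintro ⟨⟨s, hs⟩, ⟨P, hP⟩⟩; rfl }
  rw [Fintype.sum_equiv EP (fun sp => qc (n + 1 - sp.1.1.ncard))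
    (fun y => qc (n + 1 - y.1.1.ncard)) (fun x => rfl)]
  rw [← Finset.univ_sigma_univ, Finset.sum_sigma]
  dsimp only
  have step2 : ∀ s : {s : Set (Fin (n + 1)) // (0 : Fin (n + 1)) ∈ s},
      ∑ P : {P : Set (Fin (n + 1)) // (0 : Fin (n + 1)) ∈ P ∧ P ⊆ s.1},
        qc (n + 1 - s.1.ncard) = 2 ^ (s.1.ncard - 1) * qc (n + 1 - s.1.ncard) := by
    intro s
    rw [Finset.sum_const, Finset.card_univ, smul_eq_mul]
    congr 1
    rw [← Nat.card_eq_fintype_card]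
    exact card_subsets_between s.1 0 s.2
  rw [Finset.sum_congr rfl (fun s _ => step2 s)]
  let B : Finset (Fin (n + 1)) := Finset.univ.erase 0
  let E3 : {t : Set (Fin (n + 1)) // t ⊆ ↑B} ≃
      {s : Set (Fin (n + 1)) // (0 : Fin (n + 1)) ∈ s} :=
    { toFun := fun t => ⟨insert 0 t.1, Set.mem_insert _ _⟩
      invFun := fun s => ⟨s.1 \ {0}, by
        intro x hx
        simp only [B, Finset.coe_erase, Finset.coe_univ]
        exact ⟨trivial, hx.2⟩⟩
      left_inv := fun t => Subtype.ext (by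
        show insert (0 : Fin (n + 1)) t.1 \ {0} = t.1
        apply Set.insert_diff_self_of_notMem
        intro h
        have := t.2 h
        simp [B] at this)
      right_inv := fun s => Subtype.ext (by
        show insert (0 : Fin (n + 1)) (s.1 \ {0}) = s.1
        rw [Set.insert_diff_singleton, Set.insert_eq_self.2 s.2]) }
  rw [← Equiv.sum_comp E3 (fun s => 2 ^ (s.1.ncard - 1) * qc (n + 1 - s.1.ncard))]
  have step3 : ∀ t : {t : Set (Fin (n + 1)) // t ⊆ ↑B},
      2 ^ ((E3 t).1.ncard - 1) * qc (n + 1 - (E3 t).1.ncard)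
        = 2 ^ t.1.ncard * qc (n - t.1.ncard) := by
    intro t
    have h0 : (0 : Fin (n + 1)) ∉ t.1 := by
      intro h
      have := t.2 h
      simp [B] at this
    have : (E3 t).1.ncard = t.1.ncard + 1 := Set.ncard_insert_of_notMem h0
    have h2 : n + 1 - (t.1.ncard + 1) = n - t.1.ncard := by omega
    rw [this, Nat.add_sub_cancel, h2]
  rw [Finset.sum_congr rfl (fun t _ => step3 t)]
  rw [sum_over_subsets B (fun j => 2 ^ j * qc (n - j))]
  have hB : B.card = n := by
    rw [Finset.card_erase_of_mem (Finset.mem_univ _), Finset.card_univ, Fintype.card_fin]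
    omega
  rw [hB]

end Counting2
section PS

open PowerSeries Finset

/-- EGF of no-fixed-point counts -/
noncomputable def Gq : PowerSeries ℚ :=
  PowerSeries.mk fun n => (qc n : ℚ) / (n.factorial : ℚ)

theorem ode_unique (H F G : PowerSeries ℚ) (hF : d⁄dX ℚ F = H * F) (hG : d⁄dX ℚ G = H * G)
    (h0 : PowerSeries.constantCoeff F = PowerSeries.constantCoeff G) : F = G := by
  ext n
  induction n using Nat.strong_induction_on with
  | _ n ih =>
    match n with
    | 0 => simp only [PowerSeries.coeff_zero_eq_constantCoeff]; exact h0
    | Nat.succ n =>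
      have hF' := congrArg (PowerSeries.coeff n) hF
      have hG' := congrArg (PowerSeries.coeff n) hG
      rw [PowerSeries.coeff_derivative] at hF' hG'
      have hg : PowerSeries.coeff n (H * F) = PowerSeries.coeff n (H * G) := by
        rw [PowerSeries.coeff_mul, PowerSeries.coeff_mul]
        apply Finset.sum_congr rfl
        intro ij hij
        have h2 : ij.2 ≤ n := Finset.HasAntidiagonal.antidiagonal.snd_le hij
        rw [ih ij.2 (Nat.lt_succ_of_le h2)]
      have hne : ((n : ℚ) + 1) ≠ 0 := by positivity
      exact mul_right_cancel₀ hne (hF'.trans (hg.trans hG'.symm))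

theorem coeff_pow_eq_zero {A : PowerSeries ℚ} (hA : PowerSeries.constantCoeff A = 0)
    {j k : ℕ} (h : j < k) : PowerSeries.coeff j (A ^ k) = 0 := by
  obtain ⟨B, rfl⟩ := PowerSeries.X_dvd_iff.2 hA
  rw [mul_pow, PowerSeries.coeff_mul]
  apply Finset.sum_eq_zero
  intro ij hij
  have h1 : ij.1 ≤ j := Finset.HasAntidiagonal.antidiagonal.fst_le hij
  have h2 : ij.1 ≠ k := by omega
  rw [PowerSeries.coeff_X_pow, if_neg h2, zero_mul]

theorem coeff_pexp (A : PowerSeries ℚ) (n : ℕ) : PowerSeries.coeff n (pexp A)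
    = ∑ k ∈ Finset.range (n + 1),
        (PowerSeries.coeff n (A ^ k)) / (Nat.factorial k : ℚ) := by
  rw [pexp, PowerSeries.coeff_mk]

theorem constantCoeff_pexp (A : PowerSeries ℚ) :
    PowerSeries.constantCoeff (pexp A) = 1 := by
  rw [← PowerSeries.coeff_zero_eq_constantCoeff, coeff_pexp]
  simp

theorem derivative_pexp (A : PowerSeries ℚ) (hA : PowerSeries.constantCoeff A = 0) :
    d⁄dX ℚ (pexp A) = (d⁄dX ℚ A) * pexp A := by
  ext n
  rw [PowerSeries.coeff_derivative, coeff_pexp, Finset.sum_mul]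
  have lhs1 : ∀ k ∈ Finset.range (n + 2),
      PowerSeries.coeff (n + 1) (A ^ k) / (Nat.factorial k : ℚ) * ((n : ℚ) + 1)
        = (k : ℚ) * PowerSeries.coeff n (A ^ (k - 1) * d⁄dX ℚ A)
            / (Nat.factorial k : ℚ) := by
    intro k _
    have h1 : PowerSeries.coeff n (d⁄dX ℚ (A ^ k))
        = PowerSeries.coeff (n + 1) (A ^ k) * ((n : ℚ) + 1) := by
      rw [PowerSeries.coeff_derivative]
    have h2 : PowerSeries.coeff n (d⁄dX ℚ (A ^ k))
        = (k : ℚ) * PowerSeries.coeff n (A ^ (k - 1) * d⁄dX ℚ A) := by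
      rw [Derivation.leibniz_pow, smul_eq_mul, map_nsmul, nsmul_eq_mul]
    rw [div_mul_eq_mul_div, ← h1, h2]
  rw [Finset.sum_congr rfl lhs1, Finset.sum_range_succ']
  simp only [Nat.cast_zero, zero_mul, zero_div, add_zero]
  rw [PowerSeries.coeff_mul]
  have rhs1 : ∀ ij ∈ Finset.HasAntidiagonal.antidiagonal n,
      PowerSeries.coeff ij.1 (d⁄dX ℚ A) * PowerSeries.coeff ij.2 (pexp A)
        = ∑ k ∈ Finset.range (n + 1),
            PowerSeries.coeff ij.1 (d⁄dX ℚ A)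
              * (PowerSeries.coeff ij.2 (A ^ k) / (Nat.factorial k : ℚ)) := by
    intro ij hij
    rw [coeff_pexp, Finset.mul_sum]
    apply Finset.sum_subset
    · exact Finset.range_subset_range.2 (Nat.succ_le_succ (Finset.HasAntidiagonal.antidiagonal.snd_le hij))
    · intro k hk hk2
      have hlt : ij.2 < k := by
        simp only [Finset.mem_range] at hk hk2
        omega
      rw [coeff_pow_eq_zero hA hlt, zero_div, mul_zero]
  rw [Finset.sum_congr rfl rhs1, Finset.sum_comm]
  apply Finset.sum_congr rfl
  intro k _
  have hsum : ∑ ij ∈ Finset.HasAntidiagonal.antidiagonal n,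
      PowerSeries.coeff ij.1 (d⁄dX ℚ A)
        * (PowerSeries.coeff ij.2 (A ^ k) / (Nat.factorial k : ℚ))
      = PowerSeries.coeff n (d⁄dX ℚ A * A ^ k) / (Nat.factorial k : ℚ) := by
    rw [PowerSeries.coeff_mul, Finset.sum_div]
    exact Finset.sum_congr rfl (fun ij _ => (mul_div_assoc _ _ _).symm)
  rw [hsum, Nat.add_sub_cancel,
    show A ^ k * d⁄dX ℚ A = d⁄dX ℚ A * A ^ k from mul_comm _ _, Nat.factorial_succ]
  have hne : ((k : ℚ) + 1) ≠ 0 := by positivity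
  push_cast
  rw [mul_div_mul_left _ _ hne]

end PS
section Final

open PowerSeries Finset

theorem derivative_exp_q : d⁄dX ℚ (PowerSeries.exp ℚ) = PowerSeries.exp ℚ := by
  ext n
  rw [PowerSeries.coeff_derivative, PowerSeries.coeff_exp, PowerSeries.coeff_exp]
  simp only [Algebra.algebraMap_self_apply]
  rw [Nat.factorial_succ]
  have h1 : ((n : ℚ) + 1) ≠ 0 := by positivity
  have h2 : ((n.factorial : ℚ)) ≠ 0 := by
    exact_mod_cast n.factorial_ne_zero
  push_cast
  field_simp

/-- the argument of the exponential -/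
noncomputable def Aq : PowerSeries ℚ :=
  (1 / 2 : ℚ) • (PowerSeries.rescale (2 : ℚ) (PowerSeries.exp ℚ) - 1 + 2 * PowerSeries.X)

theorem coeff_Aq (n : ℕ) : PowerSeries.coeff n Aq
    = (1 / 2 : ℚ) * ((2 : ℚ) ^ n / (n.factorial : ℚ) - (if n = 0 then 1 else 0)
        + 2 * (if n = 1 then 1 else 0)) := by
  rw [Aq, map_smul, smul_eq_mul]
  congr 1
  rw [map_add, map_sub, PowerSeries.coeff_rescale, PowerSeries.coeff_exp,
    PowerSeries.coeff_one,
    show (2 : PowerSeries ℚ) = PowerSeries.C 2 from (map_ofNat (PowerSeries.C) 2).symm,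
    PowerSeries.coeff_C_mul, PowerSeries.coeff_X]
  simp only [Algebra.algebraMap_self_apply]
  ring

theorem constantCoeff_Aq : PowerSeries.constantCoeff Aq = 0 := by
  rw [← PowerSeries.coeff_zero_eq_constantCoeff, coeff_Aq]
  norm_num

theorem dA_eq : d⁄dX ℚ Aq = PowerSeries.rescale (2 : ℚ) (PowerSeries.exp ℚ) + 1 := by
  ext n
  rw [PowerSeries.coeff_derivative, coeff_Aq, map_add, PowerSeries.coeff_rescale,
    PowerSeries.coeff_exp, PowerSeries.coeff_one]
  simp only [Algebra.algebraMap_self_apply]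
  rcases n with _ | m
  · norm_num [Nat.factorial]
  · rw [if_neg (by omega : ¬(m + 1 + 1 = 0)), if_neg (by omega : ¬(m + 1 + 1 = 1)),
      if_neg (by omega : ¬(m + 1 = 0)), Nat.factorial_succ (m + 1)]
    have h2 : ((m + 1).factorial : ℚ) ≠ 0 := by exact_mod_cast (m + 1).factorial_ne_zero
    push_cast
    field_simp
    ring

theorem constantCoeff_Gq : PowerSeries.constantCoeff Gq = 1 := by
  rw [← PowerSeries.coeff_zero_eq_constantCoeff, Gq, PowerSeries.coeff_mk, qc_zero]
  norm_num

theorem Gq_ode : d⁄dX ℚ Gq = PowerSeries.rescale (2 : ℚ) (PowerSeries.exp ℚ) * Gq := by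
  ext n
  rw [PowerSeries.coeff_derivative, PowerSeries.coeff_mul,
    Finset.Nat.sum_antidiagonal_eq_sum_range_succ_mk]
  have hL : PowerSeries.coeff (n + 1) Gq * ((n : ℚ) + 1)
      = ((qc (n + 1) : ℚ)) / (n.factorial : ℚ) := by
    rw [Gq, PowerSeries.coeff_mk, Nat.factorial_succ]
    have h1 : ((n : ℚ) + 1) ≠ 0 := by positivity
    have h2 : ((n.factorial : ℚ)) ≠ 0 := by exact_mod_cast n.factorial_ne_zero
    push_cast
    field_simp
  rw [hL, qc_succ n]
  push_cast
  rw [Finset.sum_div]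
  apply Finset.sum_congr rfl
  intro k hk
  have hkn : k ≤ n := by
    simp only [Finset.mem_range] at hk
    omega
  rw [PowerSeries.coeff_rescale, PowerSeries.coeff_exp, Gq, PowerSeries.coeff_mk,
    Nat.cast_choose ℚ hkn]
  simp only [Algebra.algebraMap_self_apply]
  have h2 : ((n.factorial : ℚ)) ≠ 0 := by exact_mod_cast n.factorial_ne_zero
  have h3 : ((k.factorial : ℚ)) ≠ 0 := by exact_mod_cast k.factorial_ne_zero
  have h4 : (((n - k).factorial : ℚ)) ≠ 0 := by exact_mod_cast (n - k).factorial_ne_zero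
  field_simp

theorem Fp_eq : (PowerSeries.mk fun n =>
      (Nat.card (TaggedPartition n) : ℚ) / (n.factorial : ℚ))
    = PowerSeries.exp ℚ * Gq := by
  ext n
  rw [PowerSeries.coeff_mk, PowerSeries.coeff_mul,
    Finset.Nat.sum_antidiagonal_eq_sum_range_succ_mk, p_eq n]
  push_cast
  rw [Finset.sum_div]
  apply Finset.sum_congr rfl
  intro k hk
  have hkn : k ≤ n := by
    simp only [Finset.mem_range] at hk
    omega
  rw [PowerSeries.coeff_exp, Gq, PowerSeries.coeff_mk, Nat.cast_choose ℚ hkn]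
  simp only [Algebra.algebraMap_self_apply]
  have h2 : ((n.factorial : ℚ)) ≠ 0 := by exact_mod_cast n.factorial_ne_zero
  have h3 : ((k.factorial : ℚ)) ≠ 0 := by exact_mod_cast k.factorial_ne_zero
  have h4 : (((n - k).factorial : ℚ)) ≠ 0 := by exact_mod_cast (n - k).factorial_ne_zero
  field_simp

theorem main_eq : (PowerSeries.mk fun n =>
      (Nat.card (TaggedPartition n) : ℚ) / (n.factorial : ℚ)) = pexp Aq := by
  rw [Fp_eq]
  apply ode_unique (PowerSeries.rescale (2 : ℚ) (PowerSeries.exp ℚ) + 1)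
  · rw [Derivation.leibniz, derivative_exp_q, Gq_ode, smul_eq_mul, smul_eq_mul]
    ring
  · rw [derivative_pexp Aq constantCoeff_Aq, dA_eq]
  · rw [map_mul, constantCoeff_Gq, constantCoeff_pexp, PowerSeries.constantCoeff_exp,
      mul_one]

end Final

/-- Proposition 7.14. The exponential generating function of the
numbers `p_n` of tagged partitions of `{1,…,n}` is `exp((e^{2x} − 1 + 2x)/2)`. -/
theorem egf_taggedPartitions :
    (PowerSeries.mk fun n => (Nat.card (TaggedPartition n) : ℚ) / (Nat.factorial n : ℚ)) =
      pexp ((1 / 2 : ℚ) •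
        (PowerSeries.rescale (2 : ℚ) (PowerSeries.exp ℚ) - 1 + 2 * PowerSeries.X)) :=
  main_eq
end

section
/- Let e_n denote the number of evenly tagged tagged partitions of {1,…,n} (with e_0 = 1). Then for all n ≥ 0, e_{n+1} = e_n + ∑_{k,ℓ ≥ 0, k+2ℓ+1 = n} (n! / (k! · ℓ! · (ℓ+1)!)) · e_k. -/
namespace Stmt19

open Set Function
open scoped Classical

variable {n m N : ℕ}

theorem TP.ext {tp tq : TaggedPartition N} (hc : tp.classes = tq.classes)
    (hs : tp.star = tq.star) : tp = tq := by
  cases tp; cases tq; simp_all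

instance : Finite (TaggedPartition N) :=
  Finite.of_injective (fun tp : TaggedPartition N => (tp.classes, tp.star))
    (fun _ _ h => TP.ext (congrArg Prod.fst h) (congrArg Prod.snd h))

instance : Finite {tp : TaggedPartition N // tp.EvenlyTagged} := Subtype.finite

theorem star_eq_none {tp : TaggedPartition N} {X : Set (Fin N)}
    (h : X ∉ tp.classes) : tp.star X = none := by
  by_contra h'
  exact h (tp.star_dom X h')

theorem class_unique {tp : TaggedPartition N} {P Q : Set (Fin N)} {i : Fin N}
    (hP : P ∈ tp.classes) (hQ : Q ∈ tp.classes) (hiP : i ∈ P) (hiQ : i ∈ Q) : P = Q :=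
  tp.eq_of_inter P hP Q hQ ⟨i, hiP, hiQ⟩

theorem class_disjoint {tp : TaggedPartition N} {P Q : Set (Fin N)}
    (hP : P ∈ tp.classes) (hQ : Q ∈ tp.classes) (hne : P ≠ Q) : Disjoint P Q := by
  rw [Set.disjoint_iff_inter_eq_empty]
  by_contra h
  exact hne (tp.eq_of_inter P hP Q hQ (Set.nonempty_iff_ne_empty.2 h))

theorem partner_unique {tp : TaggedPartition N} {P Q W : Set (Fin N)}
    (h1 : tp.star P = some W) (h2 : tp.star Q = some W) : P = Q := by
  have := tp.star_invol _ _ h1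
  have := tp.star_invol _ _ h2
  simp_all

def bigSet (u : Fin m → Fin N) (tp : TaggedPartition N) (Y : Set (Fin m)) : Set (Fin N) :=
  {i | ∃ X ∈ tp.classes, u ⁻¹' X = Y ∧ Y.Nonempty ∧ i ∈ X}

theorem bigSet_eq {u : Fin m → Fin N} {tp : TaggedPartition N} {X : Set (Fin N)}
    (hX : X ∈ tp.classes) (hne : (u ⁻¹' X).Nonempty) :
    bigSet u tp (u ⁻¹' X) = X := by
  ext i
  constructor
  · rintro ⟨X', hX', hpre, -, hiX'⟩
    obtain ⟨y, hy⟩ := hne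
    have : X' = X := class_unique hX' hX (hpre ▸ hy : y ∈ u ⁻¹' X') hy
    exact this ▸ hiX'
  · intro hi
    exact ⟨X, hX, rfl, hne, hi⟩

theorem bigSet_eq_empty {u : Fin m → Fin N} {tp : TaggedPartition N} {Y : Set (Fin m)}
    (h : ¬ ∃ X ∈ tp.classes, u ⁻¹' X = Y ∧ Y.Nonempty) :
    bigSet u tp Y = ∅ := by
  ext i
  simp only [bigSet, Set.mem_setOf_eq, Set.mem_empty_iff_false, iff_false]
  rintro ⟨X, hX, hpre, hne, -⟩
  exact h ⟨X, hX, hpre, hne⟩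

/-- the star function for `restrict` -/
noncomputable def rstar (u : Fin m → Fin N) (tp : TaggedPartition N)
    (Y : Set (Fin m)) : Option (Set (Fin m)) :=
  (tp.star (bigSet u tp Y)).bind
    (fun W => if (u ⁻¹' W).Nonempty then some (u ⁻¹' W) else none)

theorem rstar_eq_some {u : Fin m → Fin N} {tp : TaggedPartition N}
    {Y Z : Set (Fin m)} :
    rstar u tp Y = some Z ↔
      ∃ X W, X ∈ tp.classes ∧ u ⁻¹' X = Y ∧ Y.Nonempty ∧ tp.star X = some W ∧
        Z = u ⁻¹' W ∧ Z.Nonempty := by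
  constructor
  · intro h
    rcases hb : tp.star (bigSet u tp Y) with - | W
    · simp [rstar, hb] at h
    have hBmem : bigSet u tp Y ∈ tp.classes := tp.star_dom _ (by simp [hb])
    by_cases hex : ∃ X ∈ tp.classes, u ⁻¹' X = Y ∧ Y.Nonempty
    · obtain ⟨X, hX, hpre, hne⟩ := hex
      have hbig : bigSet u tp Y = X := hpre ▸ bigSet_eq hX (hpre ▸ hne)
      rw [rstar, hb] at h
      simp only [Option.bind_some] at h
      split_ifs at h with hw
      exact ⟨X, W, hX, hpre, hne, hbig ▸ hb, (Option.some_inj.1 h).symm,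
        (Option.some_inj.1 h) ▸ hw⟩
    · rw [bigSet_eq_empty hex] at hBmem
      exact absurd (tp.classes_nonempty _ hBmem) Set.not_nonempty_empty
  · rintro ⟨X, W, hX, hpre, hne, hstar, rfl, hZne⟩
    have hbig : bigSet u tp Y = X := hpre ▸ bigSet_eq hX (hpre ▸ hne)
    rw [rstar, hbig, hstar]
    simp [hZne]

noncomputable def restrict (u : Fin m → Fin N) (tp : TaggedPartition N) :
    TaggedPartition m where
  classes := (Set.preimage u '' tp.classes) \ {∅}
  classes_nonempty := by
    rintro P ⟨⟨X, hX, rfl⟩, hne⟩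
    exact Set.nonempty_iff_ne_empty.2 (by simpa using hne)
  cover := by
    intro i
    obtain ⟨X, hX, hiX⟩ := tp.cover (u i)
    have hiX' : i ∈ u ⁻¹' X := hiX
    exact ⟨u ⁻¹' X, ⟨⟨X, hX, rfl⟩, by
      simp only [Set.mem_singleton_iff]
      exact Set.nonempty_iff_ne_empty.1 ⟨i, hiX'⟩⟩, hiX'⟩
  eq_of_inter := by
    rintro P ⟨⟨X, hX, rfl⟩, -⟩ Q ⟨⟨X', hX', rfl⟩, -⟩ ⟨y, hy1, hy2⟩
    have : X = X' := class_unique hX hX' hy1 hy2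
    rw [this]
  star := rstar u tp
  star_dom := by
    intro Y h
    rcases ho : rstar u tp Y with - | Z
    · exact absurd ho h
    obtain ⟨X, W, hX, hpre, hne, -, -, -⟩ := rstar_eq_some.1 ho
    exact ⟨⟨X, hX, hpre⟩, by
      simp only [Set.mem_singleton_iff]
      exact Set.nonempty_iff_ne_empty.1 hne⟩
  star_ran := by
    intro Y Z h
    obtain ⟨X, W, hX, hpre, hne, hstar, rfl, hZne⟩ := rstar_eq_some.1 h
    exact ⟨⟨W, tp.star_ran _ _ hstar, rfl⟩, by
      simp only [Set.mem_singleton_iff]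
      exact Set.nonempty_iff_ne_empty.1 hZne⟩
  star_invol := by
    intro Y Z h
    obtain ⟨X, W, hX, hpre, hne, hstar, rfl, hZne⟩ := rstar_eq_some.1 h
    exact rstar_eq_some.2 ⟨W, X, tp.star_ran _ _ hstar, rfl, hZne,
      tp.star_invol _ _ hstar, hpre.symm, hne⟩
  star_fixed := by
    intro Y Z hY hZ
    obtain ⟨X, W, hX, hpre, hne, hstar, hYW, -⟩ := rstar_eq_some.1 hY
    obtain ⟨X', W', hX', hpre', hne', hstar', hZW', -⟩ := rstar_eq_some.1 hZ
    obtain ⟨y, hy⟩ := hne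
    have hyX : u y ∈ X := by rw [← hpre] at hy; exact hy
    have hyW : u y ∈ W := by rw [hYW] at hy; exact hy
    have hXW : X = W := class_unique hX (tp.star_ran _ _ hstar) hyX hyW
    obtain ⟨z, hz⟩ := hne'
    have hzX : u z ∈ X' := by rw [← hpre'] at hz; exact hz
    have hzW : u z ∈ W' := by rw [hZW'] at hz; exact hz
    have hXW' : X' = W' := class_unique hX' (tp.star_ran _ _ hstar') hzX hzW
    have : X = X' := tp.star_fixed X X' (hXW ▸ hstar) (hXW' ▸ hstar')
    rw [← hpre, ← hpre', this]

theorem restrict_star {u : Fin m → Fin N} {tp : TaggedPartition N} :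
    (restrict u tp).star = rstar u tp := rfl

theorem restrict_classes {u : Fin m → Fin N} {tp : TaggedPartition N} :
    (restrict u tp).classes = (Set.preimage u '' tp.classes) \ {∅} := rfl




/-- the canonical embedding `Fin n → Fin (n+1)` -/
def iot (n : ℕ) : Fin n → Fin (n + 1) := Fin.castSucc

theorem iot_inj : Injective (iot n) := Fin.castSucc_injective n

theorem iot_ne_last (j : Fin n) : iot n j ≠ Fin.last n :=
  Fin.ne_last_of_lt (Fin.castSucc_lt_last j)

theorem range_iot : Set.range (iot n) = {Fin.last n}ᶜ := by
  ext x
  simp only [Set.mem_range, Set.mem_compl_iff, Set.mem_singleton_iff]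
  constructor
  · rintro ⟨j, rfl⟩; exact iot_ne_last j
  · intro h; exact Fin.exists_castSucc_eq.2 h

theorem subset_range_iot {X : Set (Fin (n + 1))} :
    X ⊆ Set.range (iot n) ↔ Fin.last n ∉ X := by
  rw [range_iot]
  constructor
  · intro h hL; exact (h hL) rfl
  · intro h x hx hxL
    rw [Set.mem_singleton_iff] at hxL
    subst hxL
    exact h hx

theorem image_iot_eq_self {X : Set (Fin (n + 1))} (h : Fin.last n ∉ X) :
    iot n '' (iot n ⁻¹' X) = X :=
  Set.image_preimage_eq_of_subset (subset_range_iot.2 h)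

theorem last_not_mem_image (P : Set (Fin n)) : Fin.last n ∉ iot n '' P := by
  rintro ⟨j, -, hj⟩
  exact iot_ne_last j hj

theorem image_iot_injective : Injective (Set.image (iot n)) :=
  Set.image_injective.2 iot_inj

/-- The union of all fixed classes (empty or the unique fixed class). -/
def Rset (tp : TaggedPartition n) : Set (Fin n) :=
  {i | ∃ P, tp.star P = some P ∧ i ∈ P}

theorem Rset_eq_of_fixed {tp : TaggedPartition n} {P : Set (Fin n)}
    (h : tp.star P = some P) : Rset tp = P := by
  ext i
  constructor
  · rintro ⟨Q, hQ, hiQ⟩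
    rwa [tp.star_fixed Q P hQ h] at hiQ
  · intro hi; exact ⟨P, h, hi⟩

theorem Rset_star {tp : TaggedPartition n} (h : (Rset tp).Nonempty) :
    tp.star (Rset tp) = some (Rset tp) := by
  obtain ⟨i, P, hP, -⟩ := h
  rw [Rset_eq_of_fixed hP]; exact hP

theorem Rset_mem {tp : TaggedPartition n} (h : (Rset tp).Nonempty) :
    Rset tp ∈ tp.classes :=
  tp.star_ran _ _ (Rset_star h)

theorem star_ne_fixed_of_ne_Rset {tp : TaggedPartition n} {P W : Set (Fin n)}
    (hs : tp.star P = some W) (hne : P ≠ Rset tp) : W ≠ Rset tp := by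
  intro hW
  subst hW
  by_cases hR : (Rset tp).Nonempty
  · have h1 := tp.star_invol _ _ hs
    have h2 := Rset_star hR
    rw [h1] at h2
    exact hne (Option.some_inj.1 h2)
  · have hWmem := tp.star_ran _ _ hs
    rw [Set.not_nonempty_iff_eq_empty] at hR
    rw [hR] at hWmem
    exact Set.not_nonempty_empty (tp.classes_nonempty _ hWmem)

/-- the new fixed class of the graft -/
def Fcl (tp : TaggedPartition n) : Set (Fin (n + 1)) :=
  iot n '' Rset tp ∪ {Fin.last n}

theorem last_mem_Fcl (tp : TaggedPartition n) : Fin.last n ∈ Fcl tp :=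
  Or.inr rfl

theorem image_ne_Fcl (tp : TaggedPartition n) (P : Set (Fin n)) :
    iot n '' P ≠ Fcl tp := by
  intro h
  exact last_not_mem_image P (h ▸ last_mem_Fcl tp)

/-- the star function of the graft -/
noncomputable def gstar (tp : TaggedPartition n) (X : Set (Fin (n + 1))) :
    Option (Set (Fin (n + 1))) :=
  if X = Fcl tp then some (Fcl tp)
  else if Fin.last n ∉ X ∧ X ≠ iot n '' Rset tp then
    Option.map (Set.image (iot n)) (tp.star (iot n ⁻¹' X))
  else none

theorem gstar_eq_some {tp : TaggedPartition n} {X Z : Set (Fin (n + 1))} :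
    gstar tp X = some Z ↔
      (X = Fcl tp ∧ Z = Fcl tp) ∨
      (Fin.last n ∉ X ∧ X ≠ iot n '' Rset tp ∧
        ∃ W, tp.star (iot n ⁻¹' X) = some W ∧ Z = iot n '' W) := by
  unfold gstar
  split_ifs with h1 h2
  · subst h1
    simp only [Option.some_inj]
    constructor
    · intro h; exact Or.inl ⟨by trivial, h.symm⟩
    · rintro (⟨-, rfl⟩ | ⟨hL, -, -⟩)
      · rfl
      · exact absurd (last_mem_Fcl tp) hL
  · obtain ⟨hL, hR⟩ := h2
    constructor
    · intro h
      rcases hs : tp.star (iot n ⁻¹' X) with - | W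
      · rw [hs] at h; simp at h
      · rw [hs] at h
        simp only [Option.map_some] at h
        exact Or.inr ⟨hL, hR, W, rfl, (Option.some_inj.1 h).symm⟩
    · rintro (⟨rfl, -⟩ | ⟨-, -, W, hs, rfl⟩)
      · exact absurd rfl h1
      · rw [hs]; rfl
  · constructor
    · intro h; simp at h
    · rintro (⟨rfl, -⟩ | ⟨hL, hR, -⟩)
      · exact absurd rfl h1
      · exact absurd ⟨hL, hR⟩ h2


theorem gstar_F (tp : TaggedPartition n) : gstar tp (Fcl tp) = some (Fcl tp) := by
  unfold gstar
  rw [if_pos rfl]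

/-- grafting the last element onto the fixed class (or as a new fixed singleton) -/
noncomputable def graft (tp : TaggedPartition n) : TaggedPartition (n + 1) where
  classes := (Set.image (iot n) '' tp.classes) \ {iot n '' Rset tp} ∪ {Fcl tp}
  classes_nonempty := by
    rintro P (⟨⟨X, hX, rfl⟩, -⟩ | hP)
    · exact (tp.classes_nonempty X hX).image _
    · rw [Set.mem_singleton_iff] at hP
      exact ⟨Fin.last n, hP ▸ last_mem_Fcl tp⟩
  cover := by
    intro i
    by_cases hiL : i = Fin.last n
    · exact ⟨Fcl tp, Or.inr rfl, hiL ▸ last_mem_Fcl tp⟩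
    · obtain ⟨j, rfl⟩ := Fin.exists_castSucc_eq.2 hiL
      obtain ⟨P, hP, hjP⟩ := tp.cover j
      by_cases hPR : P = Rset tp
      · exact ⟨Fcl tp, Or.inr rfl, Or.inl ⟨j, hPR ▸ hjP, rfl⟩⟩
      · exact ⟨iot n '' P, Or.inl ⟨⟨P, hP, rfl⟩, by
          simpa using fun h => hPR (image_iot_injective h)⟩, ⟨j, hjP, rfl⟩⟩
  eq_of_inter := by
    have aux : ∀ X ∈ tp.classes, iot n '' X ≠ iot n '' Rset tp →
        ∀ y, y ∈ iot n '' X → y ∈ Fcl tp → False := by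
      rintro X hX hne y ⟨a, haX, rfl⟩ hyF
      rcases hyF with ⟨b, hbR, hab⟩ | hyL
      · have hba : b = a := iot_inj hab
        subst hba
        have hRmem : Rset tp ∈ tp.classes := Rset_mem ⟨b, hbR⟩
        exact hne (congrArg _ (class_unique hX hRmem haX hbR))
      · exact iot_ne_last a (by simpa [Set.mem_singleton_iff] using hyL)
    rintro P (⟨⟨X, hX, rfl⟩, hne⟩ | hP) Q (⟨⟨X', hX', rfl⟩, hne'⟩ | hQ) hint
    · obtain ⟨y, ⟨a, haX, rfl⟩, ⟨b, hbX', hab⟩⟩ := hint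
      have : b = a := iot_inj hab
      subst this
      rw [class_unique hX hX' haX hbX']
    · rw [Set.mem_singleton_iff] at hQ
      subst hQ
      obtain ⟨y, hy1, hy2⟩ := hint
      exact absurd (aux X hX (by simpa using hne) y hy1 hy2) not_false
    · rw [Set.mem_singleton_iff] at hP
      subst hP
      obtain ⟨y, hy1, hy2⟩ := hint
      exact absurd (aux X' hX' (by simpa using hne') y hy2 hy1) not_false
    · rw [Set.mem_singleton_iff] at hP hQ; rw [hP, hQ]
  star := gstar tp
  star_dom := by
    intro X h
    rcases ho : gstar tp X with - | Z
    · exact absurd ho h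
    rcases gstar_eq_some.1 ho with ⟨rfl, -⟩ | ⟨hL, hR, W, hs, -⟩
    · exact Or.inr rfl
    · have hXmem := tp.star_dom (iot n ⁻¹' X) (by simp [hs])
      have hXim : iot n '' (iot n ⁻¹' X) = X := image_iot_eq_self hL
      exact Or.inl ⟨⟨_, hXmem, hXim⟩, by simpa using hR⟩
  star_ran := by
    intro X Z h
    rcases gstar_eq_some.1 h with ⟨-, rfl⟩ | ⟨hL, hR, W, hs, rfl⟩
    · exact Or.inr rfl
    · have hWmem := tp.star_ran _ _ hs
      have hWne : W ≠ Rset tp := star_ne_fixed_of_ne_Rset hs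
        (fun hh => hR (by rw [← hh, image_iot_eq_self hL]))
      exact Or.inl ⟨⟨W, hWmem, rfl⟩, by
        simpa using fun h' => hWne (image_iot_injective h')⟩
  star_invol := by
    intro X Z h
    rcases gstar_eq_some.1 h with ⟨rfl, rfl⟩ | ⟨hL, hR, W, hs, rfl⟩
    · exact gstar_F tp
    · apply gstar_eq_some.2
      refine Or.inr ⟨last_not_mem_image W, ?_, iot n ⁻¹' X, ?_, (image_iot_eq_self hL).symm⟩
      · intro h'
        exact (star_ne_fixed_of_ne_Rset hs
          (fun hh => hR (by rw [← hh, image_iot_eq_self hL]))) (image_iot_injective h')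
      · rw [Set.preimage_image_eq _ iot_inj]
        exact tp.star_invol _ _ hs
  star_fixed := by
    intro X Z hX hZ
    have key : ∀ Y, gstar tp Y = some Y → Y = Fcl tp := by
      intro Y hY
      rcases gstar_eq_some.1 hY with ⟨rfl, -⟩ | ⟨hL, hR, W, hs, hYW⟩
      · rfl
      · exfalso
        have hpre : iot n ⁻¹' Y = W := by rw [hYW, Set.preimage_image_eq _ iot_inj]
        rw [hpre] at hs
        exact (hR (by rw [hYW, Rset_eq_of_fixed hs]))
    rw [key X hX, key Z hZ]


theorem graft_classes (tp : TaggedPartition n) :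
    (graft tp).classes =
      (Set.image (iot n) '' tp.classes) \ {iot n '' Rset tp} ∪ {Fcl tp} := rfl

theorem graft_star_fn (tp : TaggedPartition n) : (graft tp).star = gstar tp := rfl

theorem graft_star_F (tp : TaggedPartition n) :
    (graft tp).star (Fcl tp) = some (Fcl tp) := gstar_F tp

theorem graft_star_image {tp : TaggedPartition n} {P : Set (Fin n)}
    (hne : P ≠ Rset tp) :
    (graft tp).star (iot n '' P) = Option.map (Set.image (iot n)) (tp.star P) := by
  show gstar tp (iot n '' P) = _
  unfold gstar
  rw [if_neg (image_ne_Fcl tp P),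
    if_pos ⟨last_not_mem_image P, fun h => hne (image_iot_injective h)⟩,
    Set.preimage_image_eq _ iot_inj]

theorem Fcl_mem_graft (tp : TaggedPartition n) : Fcl tp ∈ (graft tp).classes :=
  Or.inr rfl

theorem class_last_eq_Fcl {tp : TaggedPartition n} {C : Set (Fin (n + 1))}
    (hC : C ∈ (graft tp).classes) (hL : Fin.last n ∈ C) : C = Fcl tp := by
  rcases hC with ⟨⟨X, -, rfl⟩, -⟩ | hC
  · exact absurd hL (last_not_mem_image X)
  · exact hC

theorem image_Rset_eq (tp : TaggedPartition n) :
    iot n '' Rset tp = Fcl tp \ {Fin.last n} := by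
  rw [Fcl]
  ext x
  simp only [Set.mem_diff, Set.mem_union, Set.mem_singleton_iff]
  constructor
  · intro hx
    exact ⟨Or.inl hx, by rintro rfl; exact last_not_mem_image _ hx⟩
  · rintro ⟨hx | rfl, hxL⟩
    · exact hx
    · exact absurd rfl hxL

theorem graft_evenlyTagged {tp : TaggedPartition n} (h : tp.EvenlyTagged) :
    (graft tp).EvenlyTagged := by
  constructor
  · rintro P (⟨⟨X, hX, rfl⟩, hne⟩ | hP)
    · have hne' : X ≠ Rset tp := by
        intro hh
        exact (by simpa using hne : ¬ iot n '' X = iot n '' Rset tp) (congrArg _ hh)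
      rw [graft_star_image hne']
      rcases ho : tp.star X with - | W
      · exact absurd ho (h.1 X hX)
      · simp
    · rw [Set.mem_singleton_iff] at hP
      rw [hP, graft_star_F]
      simp
  · intro X Z hXZ
    rcases gstar_eq_some.1 hXZ with ⟨rfl, rfl⟩ | ⟨hL, hR, W, hs, rfl⟩
    · rfl
    · have h1 : X = iot n '' (iot n ⁻¹' X) := (image_iot_eq_self hL).symm
      rw [h1, Set.ncard_image_of_injective _ iot_inj,
        Set.ncard_image_of_injective _ iot_inj]
      exact h.2 _ _ hs

theorem graft_Fcl_eq {tp tq : TaggedPartition n} (h : graft tp = graft tq) :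
    Fcl tp = Fcl tq := by
  apply class_last_eq_Fcl (h ▸ Fcl_mem_graft tp) (last_mem_Fcl tp)

theorem graft_Rset_eq {tp tq : TaggedPartition n} (h : graft tp = graft tq) :
    Rset tp = Rset tq := by
  apply image_iot_injective
  rw [image_Rset_eq, image_Rset_eq, graft_Fcl_eq h]

theorem graft_classes_subset {tp tq : TaggedPartition n} (h : graft tp = graft tq) :
    tp.classes ⊆ tq.classes := by
  intro P hP
  by_cases hPR : P = Rset tp
  · have hne : (Rset tp).Nonempty := hPR ▸ tp.classes_nonempty P hP
    have : (Rset tq).Nonempty := graft_Rset_eq h ▸ hne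
    rw [hPR, graft_Rset_eq h]
    exact Rset_mem this
  · have hmem : iot n '' P ∈ (graft tq).classes := by
      rw [← h]
      exact Or.inl ⟨⟨P, hP, rfl⟩, by
        simpa using fun hh => hPR (image_iot_injective hh)⟩
    rcases hmem with ⟨⟨X, hX, hXP⟩, -⟩ | hmem
    · rwa [← image_iot_injective hXP]
    · rw [Set.mem_singleton_iff] at hmem
      exact absurd (hmem ▸ last_mem_Fcl tq) (last_not_mem_image P)

theorem graft_injective : Injective (graft (n := n)) := by
  intro tp tq h
  have hcl : tp.classes = tq.classes :=
    Set.Subset.antisymm (graft_classes_subset h) (graft_classes_subset h.symm)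
  apply TP.ext hcl
  funext Y
  by_cases hY : Y ∈ tp.classes
  · by_cases hYR : Y = Rset tp
    · have hne : (Rset tp).Nonempty := hYR ▸ tp.classes_nonempty Y hY
      rw [hYR, Rset_star hne, graft_Rset_eq h,
        Rset_star (graft_Rset_eq h ▸ hne), ← graft_Rset_eq h]
    · have h1 := graft_star_image (tp := tp) hYR
      have h2 := graft_star_image (tp := tq) ((graft_Rset_eq h).symm ▸ hYR)
      rw [← h] at h2
      apply Option.map_injective image_iot_injective
      rw [← h1, ← h2]
  · rw [star_eq_none hY, star_eq_none (hcl ▸ hY)]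


/-- data for extending a tagged partition by a new pair of classes `P₀, Q₀` -/
structure EData (m n : ℕ) where
  u : Fin m → Fin (n + 1)
  P₀ : Set (Fin (n + 1))
  Q₀ : Set (Fin (n + 1))
  hu : Function.Injective u
  hP : P₀.Nonempty
  hQ : Q₀.Nonempty
  hPu : Disjoint P₀ (Set.range u)
  hQu : Disjoint Q₀ (Set.range u)
  hPQ : Disjoint P₀ Q₀
  hcov : ∀ i, i ∈ P₀ ∨ i ∈ Q₀ ∨ i ∈ Set.range u

variable {m n : ℕ}

namespace EData

theorem hne (d : EData m n) : d.P₀ ≠ d.Q₀ := by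
  intro h
  obtain ⟨x, hx⟩ := d.hP
  exact Set.disjoint_left.1 d.hPQ hx (h ▸ hx)

theorem image_ne_P₀ (d : EData m n) {W : Set (Fin m)} (hW : W.Nonempty) :
    d.u '' W ≠ d.P₀ := by
  intro h
  obtain ⟨x, hx⟩ := hW
  exact Set.disjoint_left.1 d.hPu (h ▸ ⟨x, hx, rfl⟩) ⟨x, rfl⟩

theorem image_ne_Q₀ (d : EData m n) {W : Set (Fin m)} (hW : W.Nonempty) :
    d.u '' W ≠ d.Q₀ := by
  intro h
  obtain ⟨x, hx⟩ := hW
  exact Set.disjoint_left.1 d.hQu (h ▸ ⟨x, hx, rfl⟩) ⟨x, rfl⟩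

noncomputable def estar (d : EData m n) (tp : TaggedPartition m)
    (X : Set (Fin (n + 1))) : Option (Set (Fin (n + 1))) :=
  if X = d.P₀ then some d.Q₀
  else if X = d.Q₀ then some d.P₀
  else if X ⊆ Set.range d.u then Option.map (Set.image d.u) (tp.star (d.u ⁻¹' X))
  else none

theorem estar_eq_some {d : EData m n} {tp : TaggedPartition m}
    {X Z : Set (Fin (n + 1))} :
    d.estar tp X = some Z ↔
      (X = d.P₀ ∧ Z = d.Q₀) ∨ (X = d.Q₀ ∧ Z = d.P₀) ∨
      (X ⊆ Set.range d.u ∧ X ≠ d.P₀ ∧ X ≠ d.Q₀ ∧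
        ∃ W, tp.star (d.u ⁻¹' X) = some W ∧ Z = d.u '' W) := by
  unfold estar
  split_ifs with h1 h2 h3
  · subst h1
    simp only [Option.some_inj]
    constructor
    · intro h; exact Or.inl ⟨by trivial, h.symm⟩
    · rintro (⟨-, rfl⟩ | ⟨h, -⟩ | ⟨-, h, -⟩)
      · rfl
      · exact absurd h.symm (fun hh => d.hne hh.symm)
      · exact absurd rfl h
  · subst h2
    simp only [Option.some_inj]
    constructor
    · intro h; exact Or.inr (Or.inl ⟨by trivial, h.symm⟩)
    · rintro (⟨h, -⟩ | ⟨-, rfl⟩ | ⟨-, -, h, -⟩)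
      · exact absurd h h1
      · rfl
      · exact absurd rfl h
  · constructor
    · intro h
      rcases hs : tp.star (d.u ⁻¹' X) with - | W
      · rw [hs] at h; simp at h
      · rw [hs] at h
        simp only [Option.map_some] at h
        exact Or.inr (Or.inr ⟨h3, h1, h2, W, rfl, (Option.some_inj.1 h).symm⟩)
    · rintro (⟨h, -⟩ | ⟨h, -⟩ | ⟨-, -, -, W, hs, rfl⟩)
      · exact absurd h h1
      · exact absurd h h2
      · rw [hs]; rfl
  · constructor
    · intro h; simp at h
    · rintro (⟨h, -⟩ | ⟨h, -⟩ | ⟨h, -⟩)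
      · exact absurd h h1
      · exact absurd h h2
      · exact absurd h h3

noncomputable def extend (d : EData m n) (tp : TaggedPartition m) :
    TaggedPartition (n + 1) where
  classes := Set.image d.u '' tp.classes ∪ {d.P₀, d.Q₀}
  classes_nonempty := by
    rintro P (⟨X, hX, rfl⟩ | hP)
    · exact (tp.classes_nonempty X hX).image _
    · rcases hP with rfl | hP
      · exact d.hP
      · rw [Set.mem_singleton_iff] at hP; exact hP ▸ d.hQ
  cover := by
    intro i
    rcases d.hcov i with hi | hi | ⟨j, rfl⟩
    · exact ⟨d.P₀, Or.inr (Or.inl rfl), hi⟩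
    · exact ⟨d.Q₀, Or.inr (Or.inr rfl), hi⟩
    · obtain ⟨X, hX, hjX⟩ := tp.cover j
      exact ⟨d.u '' X, Or.inl ⟨X, hX, rfl⟩, ⟨j, hjX, rfl⟩⟩
  eq_of_inter := by
    have auxP : ∀ X, (d.u '' X ∩ d.P₀).Nonempty → False := by
      rintro X ⟨y, ⟨a, -, rfl⟩, hy2⟩
      exact Set.disjoint_left.1 d.hPu hy2 ⟨a, rfl⟩
    have auxQ : ∀ X, (d.u '' X ∩ d.Q₀).Nonempty → False := by
      rintro X ⟨y, ⟨a, -, rfl⟩, hy2⟩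
      exact Set.disjoint_left.1 d.hQu hy2 ⟨a, rfl⟩
    have auxPQ : (d.P₀ ∩ d.Q₀).Nonempty → False := by
      rintro ⟨y, hy1, hy2⟩
      exact Set.disjoint_left.1 d.hPQ hy1 hy2
    rintro P hP' Q hQ' hint
    simp only [Set.mem_union, Set.mem_insert_iff, Set.mem_singleton_iff] at hP' hQ'
    rcases hP' with ⟨X, hX, rfl⟩ | rfl | rfl <;>
      rcases hQ' with ⟨X', hX', rfl⟩ | rfl | rfl
    · obtain ⟨y, ⟨a, haX, rfl⟩, ⟨b, hbX', hab⟩⟩ := hint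
      have : b = a := d.hu hab
      subst this
      rw [class_unique hX hX' haX hbX']
    · exact absurd (auxP X hint) not_false
    · exact absurd (auxQ X hint) not_false
    · exact absurd (auxP X' ⟨hint.choose, hint.choose_spec.2, hint.choose_spec.1⟩) not_false
    · rfl
    · exact absurd (auxPQ hint) not_false
    · exact absurd (auxQ X' ⟨hint.choose, hint.choose_spec.2, hint.choose_spec.1⟩) not_false
    · exact absurd (auxPQ ⟨hint.choose, hint.choose_spec.2, hint.choose_spec.1⟩) not_false
    · rfl
  star := d.estar tp
  star_dom := by
    intro X h
    rcases ho : d.estar tp X with - | Z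
    · exact absurd ho h
    rcases estar_eq_some.1 ho with ⟨rfl, -⟩ | ⟨rfl, -⟩ | ⟨hsub, -, -, W, hs, -⟩
    · exact Or.inr (Or.inl rfl)
    · exact Or.inr (Or.inr rfl)
    · have hXmem := tp.star_dom (d.u ⁻¹' X) (by simp [hs])
      exact Or.inl ⟨_, hXmem, Set.image_preimage_eq_of_subset hsub⟩
  star_ran := by
    intro X Z h
    rcases estar_eq_some.1 h with ⟨-, rfl⟩ | ⟨-, rfl⟩ | ⟨-, -, -, W, hs, rfl⟩
    · exact Or.inr (Or.inr rfl)
    · exact Or.inr (Or.inl rfl)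
    · exact Or.inl ⟨W, tp.star_ran _ _ hs, rfl⟩
  star_invol := by
    intro X Z h
    rcases estar_eq_some.1 h with ⟨rfl, rfl⟩ | ⟨rfl, rfl⟩ | ⟨hsub, -, -, W, hs, rfl⟩
    · exact estar_eq_some.2 (Or.inr (Or.inl ⟨rfl, rfl⟩))
    · exact estar_eq_some.2 (Or.inl ⟨rfl, rfl⟩)
    · apply estar_eq_some.2
      have hWmem := tp.star_ran _ _ hs
      have hWne := tp.classes_nonempty _ hWmem
      refine Or.inr (Or.inr ⟨Set.image_subset_range _ _, d.image_ne_P₀ hWne,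
        d.image_ne_Q₀ hWne, d.u ⁻¹' X, ?_, (Set.image_preimage_eq_of_subset hsub).symm⟩)
      rw [Set.preimage_image_eq _ d.hu]
      exact tp.star_invol _ _ hs
  star_fixed := by
    intro X Z hX hZ
    have key : ∀ Y, d.estar tp Y = some Y →
        ∃ V, tp.star V = some V ∧ Y = d.u '' V := by
      intro Y hY
      rcases estar_eq_some.1 hY with ⟨rfl, h⟩ | ⟨rfl, h⟩ | ⟨hsub, -, -, W, hs, hYW⟩
      · exact absurd h.symm (fun hh => d.hne hh.symm)
      · exact absurd h (fun hh => d.hne hh.symm)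
      · have hpre : d.u ⁻¹' Y = W := by rw [hYW, Set.preimage_image_eq _ d.hu]
        rw [hpre] at hs
        exact ⟨W, hs, hYW⟩
    obtain ⟨V, hV, rfl⟩ := key X hX
    obtain ⟨V', hV', rfl⟩ := key Z hZ
    rw [tp.star_fixed V V' hV hV']

theorem extend_classes (d : EData m n) (tp : TaggedPartition m) :
    (d.extend tp).classes = Set.image d.u '' tp.classes ∪ {d.P₀, d.Q₀} := rfl

theorem extend_star_P₀ (d : EData m n) (tp : TaggedPartition m) :
    (d.extend tp).star d.P₀ = some d.Q₀ := by
  show d.estar tp d.P₀ = _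
  unfold estar
  rw [if_pos rfl]

theorem extend_star_Q₀ (d : EData m n) (tp : TaggedPartition m) :
    (d.extend tp).star d.Q₀ = some d.P₀ := by
  show d.estar tp d.Q₀ = _
  unfold estar
  rw [if_neg (Ne.symm d.hne), if_pos rfl]

theorem extend_star_image (d : EData m n) (tp : TaggedPartition m)
    {W : Set (Fin m)} (hW : W.Nonempty) :
    (d.extend tp).star (d.u '' W) = Option.map (Set.image d.u) (tp.star W) := by
  show d.estar tp (d.u '' W) = _
  unfold estar
  rw [if_neg (d.image_ne_P₀ hW), if_neg (d.image_ne_Q₀ hW),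
    if_pos (Set.image_subset_range _ _), Set.preimage_image_eq _ d.hu]

theorem extend_evenlyTagged (d : EData m n) {tp : TaggedPartition m}
    (h : tp.EvenlyTagged) (hcard : d.P₀.ncard = d.Q₀.ncard) :
    (d.extend tp).EvenlyTagged := by
  constructor
  · rintro P (⟨X, hX, rfl⟩ | hP)
    · rw [extend_star_image d tp (tp.classes_nonempty X hX)]
      rcases ho : tp.star X with - | W
      · exact absurd ho (h.1 X hX)
      · simp
    · rcases hP with rfl | hP
      · rw [extend_star_P₀]; simp
      · rw [Set.mem_singleton_iff] at hP
        rw [hP, extend_star_Q₀]; simp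
  · intro X Z hXZ
    rcases estar_eq_some.1 hXZ with ⟨rfl, rfl⟩ | ⟨rfl, rfl⟩ | ⟨hsub, -, -, W, hs, rfl⟩
    · exact hcard
    · exact hcard.symm
    · have h1 : X = d.u '' (d.u ⁻¹' X) := (Set.image_preimage_eq_of_subset hsub).symm
      rw [h1, Set.ncard_image_of_injective _ d.hu, Set.ncard_image_of_injective _ d.hu]
      exact h.2 _ _ hs

end EData
variable {m n : ℕ}

theorem EData.last_not_range (d : EData m n) (hL : Fin.last n ∈ d.P₀) :
    Fin.last n ∉ Set.range d.u :=
  fun h => Set.disjoint_left.1 d.hPu hL h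

theorem EData.extend_class_last (d : EData m n) {tp : TaggedPartition m}
    (hL : Fin.last n ∈ d.P₀) {C : Set (Fin (n + 1))}
    (hC : C ∈ (d.extend tp).classes) (hLC : Fin.last n ∈ C) : C = d.P₀ := by
  rcases hC with ⟨X, -, rfl⟩ | hC
  · exfalso
    obtain ⟨a, -, ha⟩ := hLC
    exact d.last_not_range hL ⟨a, ha⟩
  · rcases hC with rfl | hC
    · rfl
    · rw [Set.mem_singleton_iff] at hC
      subst hC
      exact absurd hLC (fun h => Set.disjoint_left.1 d.hPQ hL h)

theorem graft_ne_extend {tp : TaggedPartition n} {tq : TaggedPartition m}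
    (d : EData m n) (hL : Fin.last n ∈ d.P₀) : graft tp ≠ d.extend tq := by
  intro h
  have h1 : Fcl tp ∈ (d.extend tq).classes := h ▸ Fcl_mem_graft tp
  have h2 : Fcl tp = d.P₀ := d.extend_class_last hL h1 (last_mem_Fcl tp)
  have h3 : (d.extend tq).star (Fcl tp) = some (Fcl tp) := h ▸ graft_star_F tp
  rw [h2, d.extend_star_P₀] at h3
  exact d.hne (Option.some_inj.1 h3).symm

theorem extend_inj (d : EData m n) {tp tq : TaggedPartition m}
    (h : d.extend tp = d.extend tq) : tp = tq := by
  have hsub : ∀ {ta tb : TaggedPartition m}, d.extend ta = d.extend tb →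
      ta.classes ⊆ tb.classes := by
    intro ta tb hab X hX
    have hne := ta.classes_nonempty X hX
    have h1 : d.u '' X ∈ (d.extend tb).classes := hab ▸ Or.inl ⟨X, hX, rfl⟩
    rcases h1 with ⟨X', hX', hXX'⟩ | h1
    · rwa [← Set.image_injective.2 d.hu hXX']
    · rcases h1 with h1 | h1
      · exact absurd h1 (d.image_ne_P₀ hne)
      · rw [Set.mem_singleton_iff] at h1
        exact absurd h1 (d.image_ne_Q₀ hne)
  have hcl : tp.classes = tq.classes := Set.Subset.antisymm (hsub h) (hsub h.symm)
  apply TP.ext hcl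
  funext Y
  by_cases hY : Y ∈ tp.classes
  · have hYne := tp.classes_nonempty Y hY
    have h1 := d.extend_star_image tp hYne
    have h2 := d.extend_star_image tq hYne
    rw [← h] at h2
    apply Option.map_injective (Set.image_injective.2 d.hu)
    rw [← h1, ← h2]
  · rw [star_eq_none hY, star_eq_none (hcl ▸ hY)]

theorem extend_eq_data {m' : ℕ} {d : EData m n} {d' : EData m' n}
    {tp : TaggedPartition m} {tq : TaggedPartition m'}
    (hL : Fin.last n ∈ d.P₀) (hL' : Fin.last n ∈ d'.P₀)
    (h : d.extend tp = d'.extend tq) : d.P₀ = d'.P₀ ∧ d.Q₀ = d'.Q₀ := by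
  have h1 : d.P₀ ∈ (d'.extend tq).classes := h ▸ Or.inr (Or.inl rfl)
  have hPP : d.P₀ = d'.P₀ := d'.extend_class_last hL' h1 hL
  have h2 : (d'.extend tq).star d.P₀ = some d.Q₀ := h ▸ d.extend_star_P₀ tp
  rw [hPP, d'.extend_star_P₀] at h2
  exact ⟨hPP, (Option.some_inj.1 h2).symm⟩


theorem partner_ne {N : ℕ} {tp : TaggedPartition N} {P Q X W : Set (Fin N)}
    (hPQ : tp.star P = some Q) (hs : tp.star X = some W) (hXQ : X ≠ Q) :
    W ≠ P := by
  rintro rfl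
  have h1 := tp.star_invol _ _ hs
  rw [hPQ] at h1
  exact hXQ (Option.some_inj.1 h1).symm

theorem notin_of_ne_class {N : ℕ} {tp : TaggedPartition N} {P X : Set (Fin N)}
    {i : Fin N} (hP : P ∈ tp.classes) (hX : X ∈ tp.classes) (hiP : i ∈ P)
    (hne : X ≠ P) : i ∉ X :=
  fun h => hne (class_unique hX hP h hiP)

theorem preimage_iot_nonempty {X : Set (Fin (n + 1))} (hXne : X.Nonempty)
    (hL : Fin.last n ∉ X) : (iot n ⁻¹' X).Nonempty := by
  obtain ⟨x, hx⟩ := hXne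
  obtain ⟨j, rfl⟩ := Fin.exists_castSucc_eq.2 (fun h => hL (h ▸ hx))
  exact ⟨j, hx⟩

theorem ncard_preimage_iot {X : Set (Fin (n + 1))} (hL : Fin.last n ∉ X) :
    (iot n ⁻¹' X).ncard = X.ncard := by
  conv_rhs => rw [← image_iot_eq_self hL]
  rw [Set.ncard_image_of_injective _ iot_inj]

section CaseA

variable {tp' : TaggedPartition (n + 1)} {P : Set (Fin (n + 1))}

theorem restrict_star_some (hET : tp'.FullyTagged)
    (hP : P ∈ tp'.classes) (hfix : tp'.star P = some P)
    {X : Set (Fin (n + 1))} (hX : X ∈ tp'.classes) (hXP : X ≠ P)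
    (hLP : Fin.last n ∈ P) :
    ∃ W, tp'.star X = some W ∧ W ≠ P ∧
      (restrict (iot n) tp').star (iot n ⁻¹' X) =
        some (iot n ⁻¹' W) := by
  rcases ho : tp'.star X with - | W
  · exact absurd ho (hET X hX)
  have hWP : W ≠ P := by
    rintro rfl
    have h1 := tp'.star_invol _ _ ho
    rw [hfix] at h1
    exact hXP (Option.some_inj.1 h1.symm)
  have hWmem := tp'.star_ran _ _ ho
  have hLX : Fin.last n ∉ X := notin_of_ne_class hP hX hLP hXP
  have hLW : Fin.last n ∉ W := notin_of_ne_class hP hWmem hLP hWP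
  refine ⟨W, rfl, hWP, ?_⟩
  rw [restrict_star]
  exact rstar_eq_some.2 ⟨X, W, hX, rfl,
    preimage_iot_nonempty (tp'.classes_nonempty X hX) hLX, ho, rfl,
    preimage_iot_nonempty (tp'.classes_nonempty W hWmem) hLW⟩

theorem restrict_fixed_star (hP : P ∈ tp'.classes) (hfix : tp'.star P = some P)
    (hne : (iot n ⁻¹' P).Nonempty) :
    (restrict (iot n) tp').star (iot n ⁻¹' P) = some (iot n ⁻¹' P) := by
  rw [restrict_star]
  exact rstar_eq_some.2 ⟨P, P, hP, rfl, hne, hfix, rfl, hne⟩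

theorem Rset_restrict (hP : P ∈ tp'.classes) (hfix : tp'.star P = some P) :
    Rset (restrict (iot n) tp') = iot n ⁻¹' P := by
  by_cases hne : (iot n ⁻¹' P).Nonempty
  · exact Rset_eq_of_fixed (restrict_fixed_star hP hfix hne)
  · rw [Set.not_nonempty_iff_eq_empty] at hne
    rw [hne, Set.eq_empty_iff_forall_notMem]
    rintro j ⟨Y, hYfix, hjY⟩
    obtain ⟨X, W, hX, hpre, hYne, hs, hYW, -⟩ := rstar_eq_some.1 hYfix
    obtain ⟨y, hy⟩ := hYne
    have hyX : iot n y ∈ X := by rw [← hpre] at hy; exact hy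
    have hyW : iot n y ∈ W := by
      have : y ∈ iot n ⁻¹' W := hYW ▸ hy
      exact this
    have hXW : X = W := class_unique hX (tp'.star_ran _ _ hs) hyX hyW
    have hXP : X = P := tp'.star_fixed X P (hXW ▸ hs) hfix
    rw [hXP, hne] at hpre
    rw [← hpre] at hy
    exact Set.not_nonempty_empty ⟨y, hy⟩

theorem Fcl_restrict (hP : P ∈ tp'.classes) (hfix : tp'.star P = some P)
    (hLP : Fin.last n ∈ P) : Fcl (restrict (iot n) tp') = P := by
  rw [Fcl, Rset_restrict hP hfix]
  ext x
  simp only [Set.mem_union, Set.mem_singleton_iff]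
  constructor
  · rintro (⟨j, hj, rfl⟩ | rfl)
    · exact hj
    · exact hLP
  · intro hx
    by_cases hxL : x = Fin.last n
    · exact Or.inr hxL
    · obtain ⟨j, rfl⟩ := Fin.exists_castSucc_eq.2 hxL
      exact Or.inl ⟨j, hx, rfl⟩

theorem restrict_ET_of_fixed (hET : tp'.EvenlyTagged)
    (hP : P ∈ tp'.classes) (hfix : tp'.star P = some P)
    (hLP : Fin.last n ∈ P) : (restrict (iot n) tp').EvenlyTagged := by
  constructor
  · rintro Y ⟨⟨X, hX, rfl⟩, hYne0⟩
    have hYne : (iot n ⁻¹' X).Nonempty :=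
      Set.nonempty_iff_ne_empty.2 (by simpa using hYne0)
    by_cases hXP : X = P
    · subst hXP
      rw [restrict_fixed_star hP hfix hYne]
      simp
    · obtain ⟨W, -, -, hr⟩ := restrict_star_some hET.1 hP hfix hX hXP hLP
      rw [hr]
      simp
  · intro Y Z hYZ
    rw [restrict_star] at hYZ
    obtain ⟨X, W, hX, hpre, hYne, hs, hZW, hZne⟩ := rstar_eq_some.1 hYZ
    by_cases hXP : X = P
    · subst hXP
      rw [hfix] at hs
      rw [← hpre, hZW, (Option.some_inj.1 hs)]
    · have hWP : W ≠ P := partner_ne hfix hs hXP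
      have hWmem := tp'.star_ran _ _ hs
      have hLX : Fin.last n ∉ X := notin_of_ne_class hP hX hLP hXP
      have hLW : Fin.last n ∉ W := notin_of_ne_class hP hWmem hLP hWP
      rw [← hpre, hZW, ncard_preimage_iot hLX, ncard_preimage_iot hLW]
      exact hET.2 _ _ hs

end CaseA

section CaseA2

variable {tp' : TaggedPartition (n + 1)} {P : Set (Fin (n + 1))}

theorem graft_restrict (hET : tp'.EvenlyTagged)
    (hP : P ∈ tp'.classes) (hfix : tp'.star P = some P)
    (hLP : Fin.last n ∈ P) : graft (restrict (iot n) tp') = tp' := by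
  set r := restrict (iot n) tp' with hr
  have hRr : Rset r = iot n ⁻¹' P := Rset_restrict hP hfix
  have hFr : Fcl r = P := Fcl_restrict hP hfix hLP
  have hclasses : (graft r).classes = tp'.classes := by
    rw [graft_classes]
    apply Set.Subset.antisymm
    · rintro C (⟨⟨Y, hY, rfl⟩, hCne⟩ | hC)
      · obtain ⟨⟨X, hX, rfl⟩, hYne0⟩ := hY
        have hXP : X ≠ P := by
          rintro rfl
          exact (by simpa using hCne : ¬ _ = _) (congrArg _ hRr.symm)
        have hLX : Fin.last n ∉ X := notin_of_ne_class hP hX hLP hXP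
        rwa [image_iot_eq_self hLX]
      · rw [Set.mem_singleton_iff] at hC
        rw [hC, hFr]
        exact hP
    · intro X hX
      by_cases hXP : X = P
      · rw [hXP, ← hFr]
        exact Or.inr rfl
      · have hLX : Fin.last n ∉ X := notin_of_ne_class hP hX hLP hXP
        have hYne : (iot n ⁻¹' X).Nonempty :=
          preimage_iot_nonempty (tp'.classes_nonempty X hX) hLX
        refine Or.inl ⟨⟨iot n ⁻¹' X, ⟨⟨X, hX, rfl⟩, by
          simpa using Set.nonempty_iff_ne_empty.1 hYne⟩, image_iot_eq_self hLX⟩, ?_⟩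
        simp only [Set.mem_singleton_iff]
        rw [hRr]
        intro hEq
        obtain ⟨y, hy⟩ := hYne
        have h1 : iot n y ∈ X := hy
        have h1' : iot n y ∈ X := hy
        rw [hEq] at h1'
        exact hXP (class_unique hX hP h1 (Set.image_preimage_subset _ _ h1'))
  apply TP.ext hclasses
  funext X
  by_cases hX : X ∈ tp'.classes
  · by_cases hXP : X = P
    · subst hXP
      rw [← hFr, graft_star_F, hFr, hfix]
    · have hLX : Fin.last n ∉ X := notin_of_ne_class hP hX hLP hXP
      have hYne : (iot n ⁻¹' X).Nonempty :=
        preimage_iot_nonempty (tp'.classes_nonempty X hX) hLX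
      obtain ⟨W, hsW, hWP, hrstar⟩ := restrict_star_some hET.1 hP hfix hX hXP hLP
      have hWmem := tp'.star_ran _ _ hsW
      have hLW : Fin.last n ∉ W := notin_of_ne_class hP hWmem hLP hWP
      have hYRr : iot n ⁻¹' X ≠ Rset r := by
        rw [hRr]
        intro hEq
        obtain ⟨y, hy⟩ := hYne
        have h2 : y ∈ iot n ⁻¹' P := by rw [← hEq]; exact hy
        exact hXP (class_unique hX hP hy h2)
      have h1 : (graft r).star (iot n '' (iot n ⁻¹' X)) =
          Option.map (Set.image (iot n)) (r.star (iot n ⁻¹' X)) :=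
        graft_star_image hYRr
      rw [image_iot_eq_self hLX] at h1
      rw [h1, hrstar, hsW]
      simp only [Option.map_some]
      rw [image_iot_eq_self hLW]
  · rw [star_eq_none hX, star_eq_none (hclasses ▸ hX : X ∉ (graft r).classes)]

end CaseA2
variable {m n N : ℕ}

theorem preimage_nonempty_of_subset_range {u : Fin m → Fin N} {X : Set (Fin N)}
    (hX : X.Nonempty) (h : X ⊆ Set.range u) : (u ⁻¹' X).Nonempty := by
  obtain ⟨x, hx⟩ := hX
  obtain ⟨j, rfl⟩ := h hx
  exact ⟨j, hx⟩

theorem ncard_preimage_of_subset_range {u : Fin m → Fin N} (hu : Injective u)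
    {X : Set (Fin N)} (h : X ⊆ Set.range u) : (u ⁻¹' X).ncard = X.ncard := by
  conv_rhs => rw [← Set.image_preimage_eq_of_subset h]
  rw [Set.ncard_image_of_injective _ hu]

section CaseB

variable {d : EData m n} {tp' : TaggedPartition (n + 1)}

theorem EDdata.class_subset_range (hP : d.P₀ ∈ tp'.classes)
    (hQmem : d.Q₀ ∈ tp'.classes) {X : Set (Fin (n + 1))} (hX : X ∈ tp'.classes)
    (hXP : X ≠ d.P₀) (hXQ : X ≠ d.Q₀) : X ⊆ Set.range d.u := by
  intro x hx
  rcases d.hcov x with hc | hc | hc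
  · exact absurd (class_unique hX hP hx hc) hXP
  · exact absurd (class_unique hX hQmem hx hc) hXQ
  · exact hc

theorem partner_notPQ (hQ : tp'.star d.P₀ = some d.Q₀)
    {X W : Set (Fin (n + 1))} (hs : tp'.star X = some W)
    (hXP : X ≠ d.P₀) (hXQ : X ≠ d.Q₀) : W ≠ d.P₀ ∧ W ≠ d.Q₀ := by
  constructor
  · exact partner_ne hQ hs hXQ
  · exact partner_ne (tp'.star_invol _ _ hQ) hs hXP

theorem restrict_star_someB (hET : tp'.FullyTagged)
    (hP : d.P₀ ∈ tp'.classes) (hQ : tp'.star d.P₀ = some d.Q₀)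
    {X : Set (Fin (n + 1))} (hX : X ∈ tp'.classes)
    (hXP : X ≠ d.P₀) (hXQ : X ≠ d.Q₀) :
    ∃ W, tp'.star X = some W ∧ W ≠ d.P₀ ∧ W ≠ d.Q₀ ∧ W ∈ tp'.classes ∧
      (restrict d.u tp').star (d.u ⁻¹' X) = some (d.u ⁻¹' W) := by
  have hQmem : d.Q₀ ∈ tp'.classes := tp'.star_ran _ _ hQ
  rcases ho : tp'.star X with - | W
  · exact absurd ho (hET X hX)
  obtain ⟨hWP, hWQ⟩ := partner_notPQ hQ ho hXP hXQ
  have hWmem := tp'.star_ran _ _ ho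
  refine ⟨W, rfl, hWP, hWQ, hWmem, ?_⟩
  rw [restrict_star]
  exact rstar_eq_some.2 ⟨X, W, hX, rfl,
    preimage_nonempty_of_subset_range (tp'.classes_nonempty X hX)
      (EDdata.class_subset_range hP hQmem hX hXP hXQ), ho, rfl,
    preimage_nonempty_of_subset_range (tp'.classes_nonempty W hWmem)
      (EDdata.class_subset_range hP hQmem hWmem hWP hWQ)⟩

theorem restrict_ET_B (hET : tp'.EvenlyTagged)
    (hP : d.P₀ ∈ tp'.classes) (hQ : tp'.star d.P₀ = some d.Q₀) :
    (restrict d.u tp').EvenlyTagged := by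
  have hQmem : d.Q₀ ∈ tp'.classes := tp'.star_ran _ _ hQ
  constructor
  · rintro Y ⟨⟨X, hX, rfl⟩, hYne0⟩
    have hYne : (d.u ⁻¹' X).Nonempty :=
      Set.nonempty_iff_ne_empty.2 (by simpa using hYne0)
    have hXP : X ≠ d.P₀ := by
      rintro rfl
      rw [Set.preimage_eq_empty d.hPu] at hYne
      exact Set.not_nonempty_empty hYne
    have hXQ : X ≠ d.Q₀ := by
      rintro rfl
      rw [Set.preimage_eq_empty d.hQu] at hYne
      exact Set.not_nonempty_empty hYne
    obtain ⟨W, -, -, -, -, hr⟩ := restrict_star_someB hET.1 hP hQ hX hXP hXQ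
    rw [hr]
    simp
  · intro Y Z hYZ
    rw [restrict_star] at hYZ
    obtain ⟨X, W, hX, hpre, hYne, hs, hZW, hZne⟩ := rstar_eq_some.1 hYZ
    have hXP : X ≠ d.P₀ := by
      rintro rfl
      rw [Set.preimage_eq_empty d.hPu] at hpre
      rw [← hpre] at hYne
      exact Set.not_nonempty_empty hYne
    have hXQ : X ≠ d.Q₀ := by
      rintro rfl
      rw [Set.preimage_eq_empty d.hQu] at hpre
      rw [← hpre] at hYne
      exact Set.not_nonempty_empty hYne
    obtain ⟨hWP, hWQ⟩ := partner_notPQ hQ hs hXP hXQ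
    have hWmem := tp'.star_ran _ _ hs
    rw [← hpre, hZW,
      ncard_preimage_of_subset_range d.hu (EDdata.class_subset_range hP hQmem hX hXP hXQ),
      ncard_preimage_of_subset_range d.hu
        (EDdata.class_subset_range hP hQmem hWmem hWP hWQ)]
    exact hET.2 _ _ hs

theorem extend_restrict (hET : tp'.EvenlyTagged)
    (hP : d.P₀ ∈ tp'.classes) (hQ : tp'.star d.P₀ = some d.Q₀) :
    d.extend (restrict d.u tp') = tp' := by
  have hQmem : d.Q₀ ∈ tp'.classes := tp'.star_ran _ _ hQ
  set r := restrict d.u tp' with hr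
  have hclasses : (d.extend r).classes = tp'.classes := by
    rw [EData.extend_classes]
    apply Set.Subset.antisymm
    · rintro C (⟨Y, ⟨⟨X, hX, rfl⟩, hYne0⟩, rfl⟩ | hC)
      · have hYne : (d.u ⁻¹' X).Nonempty :=
          Set.nonempty_iff_ne_empty.2 (by simpa using hYne0)
        have hXP : X ≠ d.P₀ := by
          rintro rfl
          rw [Set.preimage_eq_empty d.hPu] at hYne
          exact Set.not_nonempty_empty hYne
        have hXQ : X ≠ d.Q₀ := by
          rintro rfl
          rw [Set.preimage_eq_empty d.hQu] at hYne
          exact Set.not_nonempty_empty hYne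
        rwa [Set.image_preimage_eq_of_subset
          (EDdata.class_subset_range hP hQmem hX hXP hXQ)]
      · rcases hC with rfl | hC
        · exact hP
        · rw [Set.mem_singleton_iff] at hC
          exact hC ▸ hQmem
    · intro X hX
      by_cases hXP : X = d.P₀
      · exact Or.inr (Or.inl hXP)
      by_cases hXQ : X = d.Q₀
      · exact Or.inr (Or.inr (by rw [Set.mem_singleton_iff]; exact hXQ))
      · have hsub := EDdata.class_subset_range hP hQmem hX hXP hXQ
        have hYne := preimage_nonempty_of_subset_range (tp'.classes_nonempty X hX) hsub
        exact Or.inl ⟨d.u ⁻¹' X, ⟨⟨X, hX, rfl⟩, by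
          simpa using Set.nonempty_iff_ne_empty.1 hYne⟩,
          Set.image_preimage_eq_of_subset hsub⟩
  apply TP.ext hclasses
  funext X
  by_cases hX : X ∈ tp'.classes
  · by_cases hXP : X = d.P₀
    · rw [hXP, d.extend_star_P₀, hQ]
    by_cases hXQ : X = d.Q₀
    · rw [hXQ, d.extend_star_Q₀, tp'.star_invol _ _ hQ]
    · have hsub := EDdata.class_subset_range hP hQmem hX hXP hXQ
      have hYne := preimage_nonempty_of_subset_range (tp'.classes_nonempty X hX) hsub
      obtain ⟨W, hsW, hWP, hWQ, hWmem, hrstar⟩ :=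
        restrict_star_someB hET.1 hP hQ hX hXP hXQ
      have h1 : (d.extend r).star (d.u '' (d.u ⁻¹' X)) =
          Option.map (Set.image d.u) (r.star (d.u ⁻¹' X)) :=
        d.extend_star_image r hYne
      rw [Set.image_preimage_eq_of_subset hsub] at h1
      rw [h1, hrstar, hsW]
      simp only [Option.map_some]
      rw [Set.image_preimage_eq_of_subset
        (EDdata.class_subset_range hP hQmem hWmem hWP hWQ)]
  · rw [star_eq_none hX, star_eq_none (hclasses ▸ hX : X ∉ (d.extend r).classes)]

end CaseB

abbrev Idx (n : ℕ) :=
  {p : Finset (Fin n) × Finset (Fin n) // Disjoint p.1 p.2 ∧ p.2.card = p.1.card + 1}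

instance : Finite (Idx n) := Subtype.finite

def kk (i : Idx n) : ℕ := n - (2 * i.1.1.card + 1)

def Cset (i : Idx n) : Finset (Fin n) := (i.1.1 ∪ i.1.2)ᶜ

theorem Cset_card (i : Idx n) : (Cset i).card = kk i := by
  rw [Cset, Finset.card_compl, Finset.card_union_of_disjoint i.2.1, i.2.2, kk,
    Fintype.card_fin]
  omega

noncomputable def uu (i : Idx n) : Fin (kk i) → Fin (n + 1) :=
  fun j => iot n ((Cset i).orderIsoOfFin (Cset_card i) j : Fin n)

theorem uu_inj (i : Idx n) : Injective (uu i) := by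
  intro a b h
  have h1 := iot_inj h
  have h2 := Subtype.coe_injective h1
  exact ((Cset i).orderIsoOfFin (Cset_card i)).injective h2

theorem range_uu (i : Idx n) : Set.range (uu i) = iot n '' ↑(Cset i) := by
  ext x
  constructor
  · rintro ⟨j, rfl⟩
    exact ⟨_, ((Cset i).orderIsoOfFin (Cset_card i) j).2, rfl⟩
  · rintro ⟨a, ha, rfl⟩
    exact ⟨((Cset i).orderIsoOfFin (Cset_card i)).symm ⟨a, ha⟩, by
      simp [uu]⟩

theorem T_nonempty (i : Idx n) : (↑i.1.2 : Set (Fin n)).Nonempty := by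
  refine Finset.coe_nonempty.2 (Finset.card_pos.1 ?_)
  rw [i.2.2]
  exact Nat.succ_pos _

noncomputable def ddata (i : Idx n) : EData (kk i) n where
  u := uu i
  P₀ := iot n '' ↑i.1.1 ∪ {Fin.last n}
  Q₀ := iot n '' ↑i.1.2
  hu := uu_inj i
  hP := ⟨Fin.last n, Or.inr rfl⟩
  hQ := (T_nonempty i).image _
  hPu := by
    rw [range_uu]
    rw [Set.disjoint_left]
    rintro x (⟨a, ha, rfl⟩ | hx) ⟨b, hb, hab⟩
    · have : b = a := iot_inj hab
      subst this
      have : b ∈ i.1.1 ∪ i.1.2 := Finset.mem_union_left _ ha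
      simp [Cset] at hb
      exact hb.1 ha
    · rw [Set.mem_singleton_iff] at hx
      subst hx
      exact iot_ne_last b hab
  hQu := by
    rw [range_uu]
    rw [Set.disjoint_left]
    rintro x ⟨a, ha, rfl⟩ ⟨b, hb, hab⟩
    have : b = a := iot_inj hab
    subst this
    simp [Cset] at hb
    exact hb.2 ha
  hPQ := by
    rw [Set.disjoint_left]
    rintro x (⟨a, ha, rfl⟩ | hx) ⟨b, hb, hab⟩
    · have : b = a := iot_inj hab
      subst this
      exact Finset.disjoint_left.1 i.2.1 ha hb
    · rw [Set.mem_singleton_iff] at hx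
      subst hx
      exact iot_ne_last b hab
  hcov := by
    intro x
    by_cases hxL : x = Fin.last n
    · exact Or.inl (Or.inr hxL)
    · obtain ⟨j, rfl⟩ := Fin.exists_castSucc_eq.2 hxL
      by_cases hj1 : j ∈ i.1.1
      · exact Or.inl (Or.inl ⟨j, hj1, rfl⟩)
      by_cases hj2 : j ∈ i.1.2
      · exact Or.inr (Or.inl ⟨j, hj2, rfl⟩)
      · refine Or.inr (Or.inr ?_)
        rw [range_uu]
        exact ⟨j, by simp [Cset, hj1, hj2], rfl⟩

theorem ddata_P₀_ncard (i : Idx n) : (ddata i).P₀.ncard = i.1.1.card + 1 := by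
  show (iot n '' ↑i.1.1 ∪ {Fin.last n}).ncard = _
  rw [Set.ncard_union_eq (by
    rw [Set.disjoint_left]
    rintro x ⟨a, -, rfl⟩ hx
    rw [Set.mem_singleton_iff] at hx
    exact iot_ne_last a hx)]
  rw [Set.ncard_image_of_injective _ iot_inj, Set.ncard_coe_finset,
    Set.ncard_singleton]

theorem ddata_Q₀_ncard (i : Idx n) : (ddata i).Q₀.ncard = i.1.2.card := by
  show (iot n '' ↑i.1.2).ncard = _
  rw [Set.ncard_image_of_injective _ iot_inj, Set.ncard_coe_finset]

theorem ddata_hcard (i : Idx n) : (ddata i).P₀.ncard = (ddata i).Q₀.ncard := by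
  rw [ddata_P₀_ncard, ddata_Q₀_ncard, i.2.2]

theorem last_mem_ddata_P₀ (i : Idx n) : Fin.last n ∈ (ddata i).P₀ := Or.inr rfl

noncomputable def bigMap (n : ℕ) :
    ({tp : TaggedPartition n // tp.EvenlyTagged} ⊕
      Σ i : Idx n, {tp : TaggedPartition (kk i) // tp.EvenlyTagged}) →
    {tp : TaggedPartition (n + 1) // tp.EvenlyTagged}
  | Sum.inl ⟨tp, h⟩ => ⟨graft tp, graft_evenlyTagged h⟩
  | Sum.inr ⟨i, ⟨tp, h⟩⟩ => ⟨(ddata i).extend tp, (ddata i).extend_evenlyTagged h (ddata_hcard i)⟩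

theorem ddata_eq_of (i i' : Idx n) (hP : (ddata i).P₀ = (ddata i').P₀)
    (hQ : (ddata i).Q₀ = (ddata i').Q₀) : i = i' := by
  have hS : i.1.1 = i'.1.1 := by
    apply Finset.coe_injective
    apply image_iot_injective
    have h1 : iot n '' ↑i.1.1 = (ddata i).P₀ \ {Fin.last n} := by
      show _ = (iot n '' ↑i.1.1 ∪ {Fin.last n}) \ _
      rw [Set.union_diff_distrib, Set.diff_eq_empty.2 (le_refl _), Set.union_empty]
      rw [Set.diff_singleton_eq_self (last_not_mem_image _)]
    have h2 : iot n '' ↑i'.1.1 = (ddata i').P₀ \ {Fin.last n} := by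
      show _ = (iot n '' ↑i'.1.1 ∪ {Fin.last n}) \ _
      rw [Set.union_diff_distrib, Set.diff_eq_empty.2 (le_refl _), Set.union_empty]
      rw [Set.diff_singleton_eq_self (last_not_mem_image _)]
    rw [h1, h2, hP]
  have hT : i.1.2 = i'.1.2 := by
    apply Finset.coe_injective
    exact image_iot_injective hQ
  exact Subtype.ext (Prod.ext hS hT)

theorem bigMap_injective : Injective (bigMap n) := by
  rintro (⟨tp, h⟩ | ⟨i, ⟨tp, h⟩⟩) (⟨tq, h'⟩ | ⟨i', ⟨tq, h'⟩⟩) hEq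
  · have := congrArg Subtype.val hEq
    simp only [bigMap] at this
    rw [Sum.inl.injEq]
    exact Subtype.ext (graft_injective this)
  · have := congrArg Subtype.val hEq
    simp only [bigMap] at this
    exact absurd this (graft_ne_extend (ddata i') (last_mem_ddata_P₀ i'))
  · have := congrArg Subtype.val hEq
    simp only [bigMap] at this
    exact absurd this.symm (graft_ne_extend (ddata i) (last_mem_ddata_P₀ i))
  · have hval := congrArg Subtype.val hEq
    simp only [bigMap] at hval
    obtain ⟨hPP, hQQ⟩ := extend_eq_data (last_mem_ddata_P₀ i) (last_mem_ddata_P₀ i') hval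
    have hii : i = i' := ddata_eq_of i i' hPP hQQ
    subst hii
    rw [Sum.inr.injEq, Sigma.mk.inj_iff]
    exact ⟨rfl, heq_of_eq (Subtype.ext (extend_inj (ddata i) hval))⟩


theorem union_image_preimage {P : Set (Fin (n + 1))} (hLP : Fin.last n ∈ P) :
    iot n '' (iot n ⁻¹' P) ∪ {Fin.last n} = P := by
  ext x
  simp only [Set.mem_union, Set.mem_singleton_iff]
  constructor
  · rintro (⟨j, hj, rfl⟩ | rfl)
    · exact hj
    · exact hLP
  · intro hx
    by_cases hxL : x = Fin.last n
    · exact Or.inr hxL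
    · obtain ⟨j, rfl⟩ := Fin.exists_castSucc_eq.2 hxL
      exact Or.inl ⟨j, hx, rfl⟩

theorem bigMap_surjective : Surjective (bigMap n) := by
  rintro ⟨tp', hET⟩
  obtain ⟨P, hPmem, hLP⟩ := tp'.cover (Fin.last n)
  rcases hstar : tp'.star P with - | Q
  · exact absurd hstar (hET.1 P hPmem)
  by_cases hQP : Q = P
  · subst hQP
    exact ⟨Sum.inl ⟨restrict (iot n) tp', restrict_ET_of_fixed hET hPmem hstar hLP⟩,
      Subtype.ext (graft_restrict hET hPmem hstar hLP)⟩
  · have hQmem : Q ∈ tp'.classes := tp'.star_ran _ _ hstar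
    have hLQ : Fin.last n ∉ Q := notin_of_ne_class hPmem hQmem hLP hQP
    set S : Finset (Fin n) := (Set.toFinite (iot n ⁻¹' P)).toFinset with hSdef
    set T : Finset (Fin n) := (Set.toFinite (iot n ⁻¹' Q)).toFinset with hTdef
    have hcoeS : (↑S : Set (Fin n)) = iot n ⁻¹' P := Set.Finite.coe_toFinset _
    have hcoeT : (↑T : Set (Fin n)) = iot n ⁻¹' Q := Set.Finite.coe_toFinset _
    have hPQdisj : Disjoint P Q := class_disjoint hPmem hQmem (Ne.symm hQP)
    have hdisj : Disjoint S T := by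
      rw [← Finset.disjoint_coe, hcoeS, hcoeT]
      exact Disjoint.preimage _ hPQdisj
    have hPcard : P.ncard = S.card + 1 := by
      conv_lhs => rw [← union_image_preimage hLP]
      rw [Set.ncard_union_eq (by
        rw [Set.disjoint_left]
        rintro x ⟨a, -, rfl⟩ hx
        rw [Set.mem_singleton_iff] at hx
        exact iot_ne_last a hx)]
      rw [Set.ncard_image_of_injective _ iot_inj, Set.ncard_singleton, ← hcoeS,
        Set.ncard_coe_finset]
    have hQcard : Q.ncard = T.card := by
      rw [← ncard_preimage_iot hLQ, ← hcoeT, Set.ncard_coe_finset]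
    have hcard : T.card = S.card + 1 := by
      rw [← hQcard, ← hET.2 _ _ hstar, hPcard]
    set i : Idx n := ⟨(S, T), hdisj, hcard⟩ with hidef
    have hpeq : (ddata i).P₀ = P := by
      show iot n '' ↑S ∪ {Fin.last n} = P
      rw [hcoeS, union_image_preimage hLP]
    have hqeq : (ddata i).Q₀ = Q := by
      show iot n '' ↑T = Q
      rw [hcoeT, image_iot_eq_self hLQ]
    have hP' : (ddata i).P₀ ∈ tp'.classes := by rw [hpeq]; exact hPmem
    have hQ' : tp'.star (ddata i).P₀ = some (ddata i).Q₀ := by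
      rw [hpeq, hqeq]; exact hstar
    exact ⟨Sum.inr ⟨i, ⟨restrict (ddata i).u tp', restrict_ET_B hET hP' hQ'⟩⟩,
      Subtype.ext (extend_restrict hET hP' hQ')⟩

noncomputable def bigEquiv (n : ℕ) :
    ({tp : TaggedPartition n // tp.EvenlyTagged} ⊕
      Σ i : Idx n, {tp : TaggedPartition (kk i) // tp.EvenlyTagged}) ≃
    {tp : TaggedPartition (n + 1) // tp.EvenlyTagged} :=
  Equiv.ofBijective (bigMap n) ⟨bigMap_injective, bigMap_surjective⟩


noncomputable instance : Fintype (Idx n) := Fintype.ofFinite _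

/-- abbreviation for the count -/
noncomputable def ecnt (m : ℕ) : ℕ := Nat.card {tp : TaggedPartition m // tp.EvenlyTagged}

theorem card_sigma_idx :
    Nat.card (Σ i : Idx n, {tp : TaggedPartition (kk i) // tp.EvenlyTagged}) =
      ∑ i : Idx n, ecnt (kk i) := by
  letI : ∀ i : Idx n, Fintype {tp : TaggedPartition (kk i) // tp.EvenlyTagged} :=
    fun i => Fintype.ofFinite _
  rw [Nat.card_eq_fintype_card, Fintype.card_sigma]
  exact Finset.sum_congr rfl fun i _ => (Nat.card_eq_fintype_card).symm

theorem step1 :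
    ecnt (n + 1) = ecnt n + ∑ i : Idx n, ecnt (kk i) := by
  rw [ecnt, ← Nat.card_congr (bigEquiv n), Nat.card_sum, card_sigma_idx]
  rfl

def PairsF (n : ℕ) : Finset (Finset (Fin n) × Finset (Fin n)) :=
  Finset.univ.filter (fun p => Disjoint p.1 p.2 ∧ p.2.card = p.1.card + 1)

theorem step2 :
    ∑ i : Idx n, ecnt (kk i) =
      ∑ p ∈ PairsF n, ecnt (n - (2 * p.1.card + 1)) := by
  exact (Finset.sum_subtype (PairsF n) (fun x => by simp [PairsF])
    (fun p => ecnt (n - (2 * p.1.card + 1)))).symm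

theorem step3 :
    ∑ p ∈ PairsF n, ecnt (n - (2 * p.1.card + 1)) =
      ∑ l ∈ Finset.range (n + 1),
        ((PairsF n).filter (fun p => p.1.card = l)).card * ecnt (n - (2 * l + 1)) := by
  have h := Finset.sum_fiberwise_of_maps_to (s := PairsF n)
    (t := Finset.range (n + 1)) (g := fun p => p.1.card)
    (fun p _ => Finset.mem_range.2
      (Nat.lt_succ_of_le (by simpa using Finset.card_le_univ p.1)))
    (fun p => ecnt (n - (2 * p.1.card + 1)))
  rw [← h]
  apply Finset.sum_congr rfl
  intro l hl
  rw [Finset.sum_congr rfl (fun p hp => by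
    rw [(Finset.mem_filter.1 hp).2]),
    Finset.sum_const, smul_eq_mul]

theorem pairs_filter_eq (l : ℕ) :
    (PairsF n).filter (fun p => p.1.card = l) =
      ((Finset.univ : Finset (Fin n)).powersetCard l).biUnion
        (fun S => ((Sᶜ.powersetCard (l + 1)).image
          (fun T => ((S, T) : Finset (Fin n) × Finset (Fin n))))) := by
  ext p
  simp only [PairsF, Finset.mem_filter, Finset.mem_univ, true_and,
    Finset.mem_biUnion, Finset.mem_powersetCard, Finset.mem_image]
  constructor
  · rintro ⟨⟨hdisj, hcard⟩, hScard⟩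
    refine ⟨p.1, ⟨Finset.subset_univ _, hScard⟩, p.2, ⟨?_, by rw [hcard, hScard]⟩, rfl⟩
    intro x hx
    rw [Finset.mem_compl]
    exact fun h => Finset.disjoint_left.1 hdisj h hx
  · rintro ⟨S, ⟨-, hScard⟩, T, ⟨hTsub, hTcard⟩, rfl⟩
    refine ⟨⟨?_, by rw [hTcard, hScard]⟩, hScard⟩
    rw [Finset.disjoint_left]
    intro a haS haT
    exact (Finset.mem_compl.1 (hTsub haT)) haS

theorem pairs_count (l : ℕ) :
    ((PairsF n).filter (fun p => p.1.card = l)).card =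
      n.choose l * (n - l).choose (l + 1) := by
  rw [pairs_filter_eq l, Finset.card_biUnion (by
    intro S hS S' hS' hne
    rw [Function.onFun, Finset.disjoint_left]
    rintro p hp hp'
    simp only [Finset.mem_image] at hp hp'
    obtain ⟨T, -, rfl⟩ := hp
    obtain ⟨T', -, hT'⟩ := hp'
    exact hne (congrArg Prod.fst hT'.symm))]
  have hcard : ∀ S ∈ (Finset.univ : Finset (Fin n)).powersetCard l,
      ((Sᶜ.powersetCard (l + 1)).image (fun T => (S, T))).card =
        (n - l).choose (l + 1) := by
    intro S hS
    rw [Finset.mem_powersetCard] at hS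
    rw [Finset.card_image_of_injective _ (fun a b h => congrArg Prod.snd h),
      Finset.card_powersetCard, Finset.card_compl, Fintype.card_fin, hS.2]
  rw [Finset.sum_congr rfl hcard, Finset.sum_const, smul_eq_mul,
    Finset.card_powersetCard, Finset.card_univ, Fintype.card_fin]

theorem choose_eq_factorial_div {l : ℕ} (h : 2 * l + 1 ≤ n) :
    Nat.factorial n /
        (Nat.factorial (n - (2 * l + 1)) * Nat.factorial l * Nat.factorial (l + 1)) =
      n.choose l * (n - l).choose (l + 1) := by
  have h1 : l ≤ n := by omega
  have h2 : l + 1 ≤ n - l := by omega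
  have e1 := Nat.choose_mul_factorial_mul_factorial h1
  have e2 := Nat.choose_mul_factorial_mul_factorial h2
  have hk : n - l - (l + 1) = n - (2 * l + 1) := by omega
  rw [hk] at e2
  apply Nat.div_eq_of_eq_mul_left
  · positivity
  · calc Nat.factorial n
        = n.choose l * Nat.factorial l * (n - l).factorial := e1.symm
      _ = n.choose l * Nat.factorial l *
          ((n - l).choose (l + 1) * Nat.factorial (l + 1) * (n - (2 * l + 1)).factorial) := by
          rw [e2]
      _ = n.choose l * (n - l).choose (l + 1) *
          (Nat.factorial (n - (2 * l + 1)) * Nat.factorial l * Nat.factorial (l + 1)) := by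
          ring

theorem rhs_sum_eq :
    ∑ q ∈ (Finset.range (n + 1) ×ˢ Finset.range (n + 1)).filter
        (fun q => q.1 + 2 * q.2 + 1 = n),
      (Nat.factorial n /
        (Nat.factorial q.1 * Nat.factorial q.2 * Nat.factorial (q.2 + 1))) * ecnt q.1 =
    ∑ l ∈ Finset.range (n + 1),
      (n.choose l * (n - l).choose (l + 1)) * ecnt (n - (2 * l + 1)) := by
  rw [Finset.sum_filter, Finset.sum_product_right]
  apply Finset.sum_congr rfl
  intro l hl
  by_cases hle : 2 * l + 1 ≤ n
  · rw [Finset.sum_eq_single (n - (2 * l + 1))]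
    · rw [if_pos (by omega), ← choose_eq_factorial_div hle]
    · intro k hk hkne
      rw [if_neg (by omega)]
    · intro hnot
      exact absurd (Finset.mem_range.2 (by omega)) hnot
  · rw [Finset.sum_eq_zero (fun k hk => by rw [if_neg (by omega)])]
    have : (n - l).choose (l + 1) = 0 := Nat.choose_eq_zero_of_lt (by omega)
    rw [this, mul_zero, zero_mul]

theorem main_recurrence :
    ecnt (n + 1) = ecnt n +
      ∑ q ∈ (Finset.range (n + 1) ×ˢ Finset.range (n + 1)).filter
          (fun q => q.1 + 2 * q.2 + 1 = n),
        (Nat.factorial n /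
          (Nat.factorial q.1 * Nat.factorial q.2 * Nat.factorial (q.2 + 1))) * ecnt q.1 := by
  rw [step1, step2, step3, rhs_sum_eq]
  congr 1
  apply Finset.sum_congr rfl
  intro l hl
  rw [pairs_count]


theorem recurrence_evenlyTagged (n : ℕ) :
    Nat.card {tp : TaggedPartition (n + 1) // tp.EvenlyTagged} =
      Nat.card {tp : TaggedPartition n // tp.EvenlyTagged} +
      ∑ q ∈ (Finset.range (n + 1) ×ˢ Finset.range (n + 1)).filter
          (fun q => q.1 + 2 * q.2 + 1 = n),
        (Nat.factorial n /
          (Nat.factorial q.1 * Nat.factorial q.2 * Nat.factorial (q.2 + 1))) *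
          Nat.card {tp : TaggedPartition q.1 // tp.EvenlyTagged} :=
  Stmt19.main_recurrence
end Stmt19

/-- Proposition 7.16, recurrence for `e_n`. With
`e n = Nat.card {tp : TaggedPartition n // tp.EvenlyTagged}` (so `e 0 = 1`),
`e_{n+1} = e_n + ∑_{k+2ℓ+1=n} n!/(k!·ℓ!·(ℓ+1)!) · e_k`. -/
theorem recurrence_evenlyTagged (n : ℕ) :
    Nat.card {tp : TaggedPartition (n + 1) // tp.EvenlyTagged} =
      Nat.card {tp : TaggedPartition n // tp.EvenlyTagged} +
      ∑ q ∈ (Finset.range (n + 1) ×ˢ Finset.range (n + 1)).filter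
          (fun q => q.1 + 2 * q.2 + 1 = n),
        (Nat.factorial n /
          (Nat.factorial q.1 * Nat.factorial q.2 * Nat.factorial (q.2 + 1))) *
          Nat.card {tp : TaggedPartition q.1 // tp.EvenlyTagged} :=
  Stmt19.main_recurrence
end
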